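/- arXiv:1003.3576 — 5 statements merged into one kernel-verified Lean document; each statement's English description precedes it below -/
import Mathlib

section
/- Let q be a prime power. For each x ∈ F_q^* let X(x) and Y(x) be subsets of F_q, and put T = (Σ_{x ∈ F_q^*} |X(x)|) · (Σ_{y ∈ F_q^*} |Y(y)|). Then the number S of quadruples (x, y, x′, y′) with x, y ∈ F_q^*, x′ ∈ X(x), y′ ∈ Y(y) and x′ + y′ = x·y satisfies |S − T/q| ≤ 2·√(q·T). -/
open Finset Complex

namespace SarkozyAux

variable {F : Type*} [Field F] [Fintype F] [DecidableEq F]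

/-- Orthogonality over the group, for a nontrivial character twisted by `c`. -/
lemma sum_char_mul (ψ : AddChar F ℂ) (hψ : ψ ≠ 0) (c : F) :
    ∑ x : F, ψ (c * x) = if c = 0 then (Fintype.card F : ℂ) else 0 := by
  classical
  have h0 : (0 : AddChar F ℂ) = 1 := rfl
  have h := AddChar.sum_eq_ite (ψ.mulShift c)
  simp only [AddChar.mulShift_apply] at h
  rw [h]
  by_cases hc : c = 0
  · simp [hc, AddChar.mulShift_zero, h0]
  · have hne : ψ.mulShift c ≠ 1 := AddChar.IsPrimitive.of_ne_one (h0 ▸ hψ) hc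
    rw [if_neg hc, if_neg (h0 ▸ hne)]

end SarkozyAux

namespace SarkozyAux

variable {F : Type*} [Field F] [Fintype F] [DecidableEq F]

/-- Parseval over the dual group: `∑_ψ |∑_{a∈s} ψ a|² = q·|s|`. -/
lemma sum_normSq_char (s : Finset F) :
    ∑ ψ : AddChar F ℂ, ((∑ a ∈ s, ψ a) * (starRingEnd ℂ) (∑ a ∈ s, ψ a))
      = (Fintype.card F : ℂ) * s.card := by
  classical
  have key : ∀ ψ : AddChar F ℂ, (∑ a ∈ s, ψ a) * (starRingEnd ℂ) (∑ a ∈ s, ψ a)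
      = ∑ a ∈ s, ∑ b ∈ s, ψ (a - b) := by
    intro ψ
    rw [map_sum, Finset.sum_mul_sum]
    refine Finset.sum_congr rfl fun a _ => Finset.sum_congr rfl fun b _ => ?_
    rw [← AddChar.map_neg_eq_conj, ← AddChar.map_add_eq_mul, sub_eq_add_neg]
  simp_rw [key]
  rw [Finset.sum_comm]
  have : ∀ a ∈ s, ∑ ψ : AddChar F ℂ, ∑ b ∈ s, ψ (a - b)
      = (Fintype.card F : ℂ) := by
    intro a ha
    rw [Finset.sum_comm]
    have : ∀ b ∈ s, ∑ ψ : AddChar F ℂ, ψ (a - b)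
        = if a - b = 0 then (Fintype.card F : ℂ) else 0 := fun b _ =>
      AddChar.sum_apply_eq_ite _
    rw [Finset.sum_congr rfl this]
    simp only [sub_eq_zero]
    rw [Finset.sum_ite_eq s a (fun _ => (Fintype.card F : ℂ))]
    simp [ha]
  rw [Finset.sum_congr rfl this, Finset.sum_const, nsmul_eq_mul, mul_comm]

/-- `∑_{x∈F} |∑_y B y ψ(-(x y))|² = q ∑_y |B y|²` for nontrivial `ψ`. -/
lemma sum_normSq_twist (ψ : AddChar F ℂ) (hψ : ψ ≠ 0) (B : Fˣ → ℂ) :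
    ∑ x : F, ((∑ y : Fˣ, B y * ψ (-(x * y))) * (starRingEnd ℂ) (∑ y : Fˣ, B y * ψ (-(x * y))))
      = (Fintype.card F : ℂ) * ∑ y : Fˣ, B y * (starRingEnd ℂ) (B y) := by
  classical
  have key : ∀ x : F, (∑ y : Fˣ, B y * ψ (-(x * y))) * (starRingEnd ℂ) (∑ y : Fˣ, B y * ψ (-(x * y)))
      = ∑ y : Fˣ, ∑ y' : Fˣ, (B y * (starRingEnd ℂ) (B y')) * ψ (((y' : F) - (y : F)) * x) := by
    intro x
    rw [map_sum, Finset.sum_mul_sum]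
    refine Finset.sum_congr rfl fun y _ => Finset.sum_congr rfl fun y' _ => ?_
    rw [map_mul, ← AddChar.map_neg_eq_conj, neg_neg]
    rw [show B y * ψ (-(x * ↑y)) * ((starRingEnd ℂ) (B y') * ψ (x * ↑y'))
        = (B y * (starRingEnd ℂ) (B y')) * (ψ (-(x * ↑y)) * ψ (x * ↑y')) by ring]
    rw [← AddChar.map_add_eq_mul]
    congr 1
    ring
  simp_rw [key]
  rw [Finset.sum_comm]
  have step : ∀ y : Fˣ, ∑ x : F, ∑ y' : Fˣ, (B y * (starRingEnd ℂ) (B y')) * ψ (((y' : F) - (y : F)) * x)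
      = (Fintype.card F : ℂ) * (B y * (starRingEnd ℂ) (B y)) := by
    intro y
    rw [Finset.sum_comm]
    have inner : ∀ y' : Fˣ, ∑ x : F, (B y * (starRingEnd ℂ) (B y')) * ψ (((y' : F) - (y : F)) * x)
        = (B y * (starRingEnd ℂ) (B y')) * (if ((y' : F) - (y : F)) = 0 then (Fintype.card F : ℂ) else 0) := by
      intro y'
      rw [← Finset.mul_sum, sum_char_mul ψ hψ]
    rw [Fintype.sum_congr _ _ inner]
    have : ∀ y' : Fˣ, ((y' : F) - (y : F) = 0) ↔ (y' = y) := by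
      intro y'
      rw [sub_eq_zero]
      exact ⟨fun h => Units.ext h, fun h => by rw [h]⟩
    simp_rw [this]
    rw [show (∑ y' : Fˣ, B y * (starRingEnd ℂ) (B y') * if y' = y then (Fintype.card F : ℂ) else 0)
        = ∑ y' : Fˣ, (if y' = y then B y * (starRingEnd ℂ) (B y') * (Fintype.card F : ℂ) else 0) from
      Finset.sum_congr rfl fun y' _ => by split <;> simp]
    rw [Finset.sum_ite_eq' Finset.univ y
      (fun y' => B y * (starRingEnd ℂ) (B y') * (Fintype.card F : ℂ))]
    simp
    ring
  rw [Fintype.sum_congr _ _ step, ← Finset.mul_sum]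

end SarkozyAux

namespace SarkozyAux

variable {F : Type*} [Field F] [Fintype F] [DecidableEq F]

lemma expand_E (X Y : Fˣ → Finset F) (ψ : AddChar F ℂ) :
    (∑ x : Fˣ, ∑ y : Fˣ, (∑ x' ∈ X x, ψ x') * (∑ y' ∈ Y y, ψ y') * ψ (-((x : F) * (y : F))))
      = ∑ t : Fˣ × Fˣ × F × F,
          (if t.2.2.1 ∈ X t.1 ∧ t.2.2.2 ∈ Y t.2.1 then (1 : ℂ) else 0)
            * ψ (t.2.2.1 + t.2.2.2 - (t.1 : F) * (t.2.1 : F)) := by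
  classical
  rw [Fintype.sum_prod_type]
  refine Finset.sum_congr rfl fun x _ => ?_
  rw [Fintype.sum_prod_type]
  refine Finset.sum_congr rfl fun y _ => ?_
  rw [Fintype.sum_prod_type]
  have : ∀ x' : F, ∀ y' : F,
      (if x' ∈ X x ∧ y' ∈ Y y then (1 : ℂ) else 0) * ψ (x' + y' - (x : F) * (y : F))
      = (if x' ∈ X x then (1:ℂ) else 0) * ((if y' ∈ Y y then (1:ℂ) else 0)
          * (ψ x' * ψ y' * ψ (-((x : F) * (y : F))))) := by
    intro x' y'
    rw [← AddChar.map_add_eq_mul, ← AddChar.map_add_eq_mul, ← sub_eq_add_neg]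
    by_cases h1 : x' ∈ X x <;> by_cases h2 : y' ∈ Y y <;> simp [h1, h2]
  simp_rw [this, boole_mul]
  have h2 : ∀ g : F → F → ℂ,
      (∑ x' : F, ∑ y' : F, if x' ∈ X x then if y' ∈ Y y then g x' y' else 0 else 0)
        = ∑ x' ∈ X x, ∑ y' ∈ Y y, g x' y' := by
    intro g
    calc (∑ x' : F, ∑ y' : F, if x' ∈ X x then if y' ∈ Y y then g x' y' else 0 else 0)
        = ∑ x' : F, (if x' ∈ X x then ∑ y' : F, (if y' ∈ Y y then g x' y' else 0) else 0) :=
          Finset.sum_congr rfl fun x' _ => by split <;> simp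
      _ = ∑ x' ∈ X x, ∑ y' : F, (if y' ∈ Y y then g x' y' else 0) := by
          rw [Finset.sum_ite_mem, Finset.univ_inter]
      _ = ∑ x' ∈ X x, ∑ y' ∈ Y y, g x' y' :=
          Finset.sum_congr rfl fun x' _ => by rw [Finset.sum_ite_mem, Finset.univ_inter]
  rw [h2]
  simp_rw [← Finset.sum_mul, ← Finset.mul_sum, ← Finset.sum_mul]

end SarkozyAux

namespace SarkozyAux

variable {F : Type*} [Field F] [Fintype F] [DecidableEq F]

lemma main_identity (X Y : Fˣ → Finset F) :
    ∑ ψ : AddChar F ℂ, ∑ t : Fˣ × Fˣ × F × F,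
        (if t.2.2.1 ∈ X t.1 ∧ t.2.2.2 ∈ Y t.2.1 then (1:ℂ) else 0)
          * ψ (t.2.2.1 + t.2.2.2 - (t.1 : F) * (t.2.1 : F))
      = (Fintype.card F : ℂ) * ((Finset.univ.filter (fun t : Fˣ × Fˣ × F × F =>
          t.2.2.1 ∈ X t.1 ∧ t.2.2.2 ∈ Y t.2.1 ∧
            t.2.2.1 + t.2.2.2 = (t.1 : F) * (t.2.1 : F))).card : ℂ) := by
  classical
  rw [Finset.sum_comm]
  have step : ∀ t : Fˣ × Fˣ × F × F,
      ∑ ψ : AddChar F ℂ, (if t.2.2.1 ∈ X t.1 ∧ t.2.2.2 ∈ Y t.2.1 then (1:ℂ) else 0)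
        * ψ (t.2.2.1 + t.2.2.2 - (t.1 : F) * (t.2.1 : F))
      = if (t.2.2.1 ∈ X t.1 ∧ t.2.2.2 ∈ Y t.2.1 ∧
            t.2.2.1 + t.2.2.2 = (t.1 : F) * (t.2.1 : F))
          then (Fintype.card F : ℂ) else 0 := by
    intro t
    rw [← Finset.mul_sum, AddChar.sum_apply_eq_ite]
    by_cases h1 : t.2.2.1 ∈ X t.1
      <;> by_cases h2 : t.2.2.2 ∈ Y t.2.1
      <;> by_cases h3 : t.2.2.1 + t.2.2.2 = (t.1 : F) * (t.2.1 : F)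
      <;> simp [h1, h2, h3, sub_eq_zero]
  rw [Fintype.sum_congr _ _ step]
  have : ∀ t : Fˣ × Fˣ × F × F,
      (if (t.2.2.1 ∈ X t.1 ∧ t.2.2.2 ∈ Y t.2.1 ∧
            t.2.2.1 + t.2.2.2 = (t.1 : F) * (t.2.1 : F))
          then (Fintype.card F : ℂ) else 0)
      = (Fintype.card F : ℂ) * (if (t.2.2.1 ∈ X t.1 ∧ t.2.2.2 ∈ Y t.2.1 ∧
            t.2.2.1 + t.2.2.2 = (t.1 : F) * (t.2.1 : F)) then (1:ℂ) else 0) := by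
    intro t; split <;> simp
  rw [Fintype.sum_congr _ _ this, ← Finset.mul_sum, Finset.sum_boole]

end SarkozyAux

namespace SarkozyAux

variable {F : Type*} [Field F] [Fintype F] [DecidableEq F]

lemma twist_real (ψ : AddChar F ℂ) (hψ : ψ ≠ 0) (B : Fˣ → ℂ) :
    ∑ x : F, Complex.normSq (∑ y : Fˣ, B y * ψ (-(x * y)))
      = (Fintype.card F : ℝ) * ∑ y : Fˣ, Complex.normSq (B y) := by
  have h := sum_normSq_twist ψ hψ B
  simp_rw [Complex.mul_conj] at h
  exact_mod_cast h

lemma parseval_real (X : Fˣ → Finset F) :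
    ∑ ψ : AddChar F ℂ, ∑ x : Fˣ, Complex.normSq (∑ x' ∈ X x, ψ x')
      = (Fintype.card F : ℝ) * ∑ x : Fˣ, ((X x).card : ℝ) := by
  classical
  rw [Finset.sum_comm]
  have h : ∀ x : Fˣ, ∑ ψ : AddChar F ℂ, Complex.normSq (∑ x' ∈ X x, ψ x')
      = (Fintype.card F : ℝ) * ((X x).card : ℝ) := by
    intro x
    have h := sum_normSq_char (F := F) (X x)
    simp_rw [Complex.mul_conj] at h
    exact_mod_cast h
  rw [Fintype.sum_congr _ _ h, ← Finset.mul_sum]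

lemma bound_E (X Y : Fˣ → Finset F) (ψ : AddChar F ℂ) (hψ : ψ ≠ 0) :
    norm (∑ x : Fˣ, ∑ y : Fˣ,
        (∑ x' ∈ X x, ψ x') * (∑ y' ∈ Y y, ψ y') * ψ (-((x : F) * (y : F))))
      ≤ Real.sqrt (∑ x : Fˣ, Complex.normSq (∑ x' ∈ X x, ψ x'))
        * Real.sqrt ((Fintype.card F : ℝ)
            * ∑ y : Fˣ, Complex.normSq (∑ y' ∈ Y y, ψ y')) := by
  classical
  set A : Fˣ → ℂ := fun x => ∑ x' ∈ X x, ψ x' with hA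
  set B : Fˣ → ℂ := fun y => ∑ y' ∈ Y y, ψ y' with hB
  set C : F → ℂ := fun x => ∑ y : Fˣ, B y * ψ (-(x * y)) with hC
  have hE : (∑ x : Fˣ, ∑ y : Fˣ, A x * B y * ψ (-((x : F) * (y : F))))
      = ∑ x : Fˣ, A x * C (x : F) := by
    refine Finset.sum_congr rfl fun x _ => ?_
    rw [hC, Finset.mul_sum]
    exact Finset.sum_congr rfl fun y _ => by ring
  rw [hE]
  -- triangle inequality
  have h1 : norm (∑ x : Fˣ, A x * C (x : F))
      ≤ ∑ x : Fˣ, norm (A x) * norm (C (x : F)) := by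
    refine (norm_sum_le _ _).trans_eq ?_
    exact Finset.sum_congr rfl fun x _ => norm_mul _ _
  refine h1.trans ?_
  -- Cauchy-Schwarz
  have h2 : (∑ x : Fˣ, norm (A x) * norm (C (x : F))) ^ 2
      ≤ (∑ x : Fˣ, Complex.normSq (A x)) * (∑ x : Fˣ, Complex.normSq (C (x : F))) := by
    have := Finset.sum_mul_sq_le_sq_mul_sq Finset.univ
      (fun x : Fˣ => norm (A x)) (fun x : Fˣ => norm (C (x : F)))
    simpa [Complex.sq_norm] using this
  -- extend the (Fˣ)-indexed sum of |C|² to all of F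
  have h3 : (∑ x : Fˣ, Complex.normSq (C (x : F))) ≤ ∑ x : F, Complex.normSq (C x) := by
    have himg : (∑ x : Fˣ, Complex.normSq (C (x : F)))
        = ∑ x ∈ Finset.univ.image (fun u : Fˣ => (u : F)), Complex.normSq (C x) := by
      rw [Finset.sum_image (fun u _ v _ h => Units.ext h)]
    rw [himg]
    exact Finset.sum_le_sum_of_subset_of_nonneg (Finset.subset_univ _)
      (fun i _ _ => Complex.normSq_nonneg _)
  have h4 : (∑ x : F, Complex.normSq (C x))
      = (Fintype.card F : ℝ) * ∑ y : Fˣ, Complex.normSq (B y) := twist_real ψ hψ B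
  have hsum_nonneg : (0:ℝ) ≤ ∑ x : Fˣ, norm (A x) * norm (C (x : F)) :=
    Finset.sum_nonneg fun x _ => mul_nonneg (norm_nonneg _) (norm_nonneg _)
  have hα : (0:ℝ) ≤ ∑ x : Fˣ, Complex.normSq (A x) :=
    Finset.sum_nonneg fun x _ => Complex.normSq_nonneg _
  have hfinal : (∑ x : Fˣ, norm (A x) * norm (C (x : F))) ^ 2
      ≤ (∑ x : Fˣ, Complex.normSq (A x))
        * ((Fintype.card F : ℝ) * ∑ y : Fˣ, Complex.normSq (B y)) := by
    refine h2.trans ?_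
    exact mul_le_mul_of_nonneg_left (h4 ▸ h3) hα
  calc (∑ x : Fˣ, norm (A x) * norm (C (x : F)))
      ≤ Real.sqrt ((∑ x : Fˣ, Complex.normSq (A x))
          * ((Fintype.card F : ℝ) * ∑ y : Fˣ, Complex.normSq (B y))) := by
        rw [show (∑ x : Fˣ, norm (A x) * norm (C (x : F)))
            = Real.sqrt ((∑ x : Fˣ, norm (A x) * norm (C (x : F))) ^ 2) by
          rw [Real.sqrt_sq hsum_nonneg]]
        exact Real.sqrt_le_sqrt hfinal
    _ = _ := Real.sqrt_mul hα _

end SarkozyAux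

open SarkozyAux in
/-- **Sárközy-type.** Let `q` be a prime power. For each `x ∈ F_q^*`
let `X(x), Y(x) ⊆ F_q`, and put `T = (Σ_x |X(x)|)·(Σ_y |Y(y)|)`. Then the number `S`
of quadruples `(x,y,x',y')` with `x, y ∈ F_q^*`, `x' ∈ X(x)`, `y' ∈ Y(y)` and
`x' + y' = x·y` satisfies `|S − T/q| ≤ 2·√(q·T)`. -/
theorem solutions_sum_eq_product {F : Type*} [Field F] [Fintype F] [DecidableEq F]
    (X Y : Fˣ → Finset F) :
    |((Finset.univ.filter (fun t : Fˣ × Fˣ × F × F =>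
          t.2.2.1 ∈ X t.1 ∧ t.2.2.2 ∈ Y t.2.1 ∧
            t.2.2.1 + t.2.2.2 = (t.1 : F) * (t.2.1 : F))).card : ℝ)
        - ((∑ x : Fˣ, ((X x).card : ℝ)) * (∑ y : Fˣ, ((Y y).card : ℝ)))
          / (Fintype.card F : ℝ)|
      ≤ 2 * Real.sqrt ((Fintype.card F : ℝ)
          * ((∑ x : Fˣ, ((X x).card : ℝ)) * (∑ y : Fˣ, ((Y y).card : ℝ)))) := by
  classical
  set q : ℕ := Fintype.card F with hqdef
  have hq0 : 0 < q := Fintype.card_pos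
  have hqR : (0:ℝ) < (q:ℝ) := by exact_mod_cast hq0
  have hqC : (q:ℂ) ≠ 0 := by exact_mod_cast hq0.ne'
  set S : ℕ := (Finset.univ.filter (fun t : Fˣ × Fˣ × F × F =>
      t.2.2.1 ∈ X t.1 ∧ t.2.2.2 ∈ Y t.2.1 ∧
        t.2.2.1 + t.2.2.2 = (t.1 : F) * (t.2.1 : F))).card with hSdef
  set a : ℝ := ∑ x : Fˣ, ((X x).card : ℝ) with hadef
  set b : ℝ := ∑ y : Fˣ, ((Y y).card : ℝ) with hbdef
  have ha0 : 0 ≤ a := Finset.sum_nonneg fun _ _ => by positivity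
  have hb0 : 0 ≤ b := Finset.sum_nonneg fun _ _ => by positivity
  -- the character sum `E ψ`
  set E : AddChar F ℂ → ℂ := fun ψ => ∑ x : Fˣ, ∑ y : Fˣ,
      (∑ x' ∈ X x, ψ x') * (∑ y' ∈ Y y, ψ y') * ψ (-((x : F) * (y : F))) with hEdef
  have hkey : ∑ ψ : AddChar F ℂ, E ψ = (q : ℂ) * (S : ℂ) := by
    rw [Fintype.sum_congr _ _ (fun ψ => expand_E X Y ψ)]
    exact main_identity X Y
  have hE0 : E 0 = (∑ x : Fˣ, ((X x).card : ℂ)) * (∑ y : Fˣ, ((Y y).card : ℂ)) := by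
    rw [hEdef]
    simp only [AddChar.zero_apply, Finset.sum_const, nsmul_eq_mul, mul_one]
    rw [Finset.sum_mul_sum]
  have hsplit : E 0 + ∑ ψ ∈ Finset.univ.erase 0, E ψ = ∑ ψ : AddChar F ℂ, E ψ :=
    Finset.add_sum_erase _ E (Finset.mem_univ 0)
  -- the main complex identity
  have hmain : (S : ℂ) - ((a : ℂ) * (b : ℂ)) / (q : ℂ)
      = (∑ ψ ∈ Finset.univ.erase 0, E ψ) / (q : ℂ) := by
    have hab : E 0 = (a : ℂ) * (b : ℂ) := by
      rw [hE0, hadef, hbdef]; push_cast; ring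
    have hqS : (q : ℂ) * (S : ℂ) = E 0 + ∑ ψ ∈ Finset.univ.erase 0, E ψ :=
      hkey.symm.trans hsplit.symm
    rw [eq_div_iff hqC, sub_mul, div_mul_cancel₀ _ hqC]
    linear_combination hqS + hab
  -- pass to absolute values
  have habs : |(S : ℝ) - a * b / (q : ℝ)|
      = norm ((S : ℂ) - ((a : ℂ) * (b : ℂ)) / (q : ℂ)) := by
    rw [show ((S : ℂ) - ((a : ℂ) * (b : ℂ)) / (q : ℂ))
        = (((S : ℝ) - a * b / (q : ℝ) : ℝ) : ℂ) by push_cast; ring]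
    rw [Complex.norm_real, Real.norm_eq_abs]
  rw [habs, hmain, norm_div, Complex.norm_natCast]
  -- bound the non-trivial character contribution
  set α : AddChar F ℂ → ℝ := fun ψ => ∑ x : Fˣ, Complex.normSq (∑ x' ∈ X x, ψ x') with hαdef
  set β : AddChar F ℂ → ℝ := fun ψ => ∑ y : Fˣ, Complex.normSq (∑ y' ∈ Y y, ψ y') with hβdef
  have hα0 : ∀ ψ, 0 ≤ α ψ := fun ψ => Finset.sum_nonneg fun _ _ => Complex.normSq_nonneg _
  have hβ0 : ∀ ψ, 0 ≤ β ψ := fun ψ => Finset.sum_nonneg fun _ _ => Complex.normSq_nonneg _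
  have hbound : ∀ ψ ∈ Finset.univ.erase (0 : AddChar F ℂ),
      norm (E ψ) ≤ Real.sqrt q * (Real.sqrt (α ψ) * Real.sqrt (β ψ)) := by
    intro ψ hψ
    have hne : ψ ≠ 0 := (Finset.mem_erase.1 hψ).1
    have := bound_E X Y ψ hne
    rw [Real.sqrt_mul (by positivity : (0:ℝ) ≤ (q:ℝ))] at this
    calc norm (E ψ) ≤ Real.sqrt (α ψ) * (Real.sqrt q * Real.sqrt (β ψ)) := this
      _ = Real.sqrt q * (Real.sqrt (α ψ) * Real.sqrt (β ψ)) := by ring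
  have htri : norm (∑ ψ ∈ Finset.univ.erase 0, E ψ)
      ≤ ∑ ψ ∈ Finset.univ.erase 0, norm (E ψ) := norm_sum_le _ _
  have hsum1 : (∑ ψ ∈ Finset.univ.erase 0, norm (E ψ))
      ≤ Real.sqrt q * ∑ ψ ∈ Finset.univ.erase 0, Real.sqrt (α ψ) * Real.sqrt (β ψ) := by
    rw [Finset.mul_sum]
    exact Finset.sum_le_sum hbound
  -- Cauchy-Schwarz over the characters
  have hαsum : ∑ ψ ∈ Finset.univ.erase 0, α ψ ≤ (q : ℝ) * a := by
    calc ∑ ψ ∈ Finset.univ.erase 0, α ψ ≤ ∑ ψ : AddChar F ℂ, α ψ :=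
          Finset.sum_le_sum_of_subset_of_nonneg (Finset.erase_subset _ _)
            (fun ψ _ _ => hα0 ψ)
      _ = (q : ℝ) * a := parseval_real X
  have hβsum : ∑ ψ ∈ Finset.univ.erase 0, β ψ ≤ (q : ℝ) * b := by
    calc ∑ ψ ∈ Finset.univ.erase 0, β ψ ≤ ∑ ψ : AddChar F ℂ, β ψ :=
          Finset.sum_le_sum_of_subset_of_nonneg (Finset.erase_subset _ _)
            (fun ψ _ _ => hβ0 ψ)
      _ = (q : ℝ) * b := parseval_real Y
  have hCS : (∑ ψ ∈ Finset.univ.erase 0, Real.sqrt (α ψ) * Real.sqrt (β ψ)) ^ 2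
      ≤ ((q : ℝ) * a) * ((q : ℝ) * b) := by
    have h := Finset.sum_sq_le_sum_mul_sum_of_sq_eq_mul (Finset.univ.erase 0)
      (r := fun ψ => Real.sqrt (α ψ) * Real.sqrt (β ψ)) (f := α) (g := β)
      (fun ψ _ => hα0 ψ) (fun ψ _ => hβ0 ψ)
      (fun ψ _ => by rw [mul_pow, Real.sq_sqrt (hα0 ψ), Real.sq_sqrt (hβ0 ψ)])
    refine h.trans ?_
    exact mul_le_mul hαsum hβsum (Finset.sum_nonneg fun ψ _ => hβ0 ψ)
      (mul_nonneg hqR.le ha0)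
  have hCS' : (∑ ψ ∈ Finset.univ.erase 0, Real.sqrt (α ψ) * Real.sqrt (β ψ))
      ≤ (q : ℝ) * Real.sqrt (a * b) := by
    have hnn : 0 ≤ ∑ ψ ∈ Finset.univ.erase 0, Real.sqrt (α ψ) * Real.sqrt (β ψ) :=
      Finset.sum_nonneg fun ψ _ => mul_nonneg (Real.sqrt_nonneg _) (Real.sqrt_nonneg _)
    have h := Real.sqrt_le_sqrt hCS
    rw [Real.sqrt_sq hnn] at h
    refine h.trans_eq ?_
    rw [show ((q : ℝ) * a) * ((q : ℝ) * b) = ((q:ℝ) * Real.sqrt (a*b))^2 by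
      rw [mul_pow, Real.sq_sqrt (mul_nonneg ha0 hb0)]; ring]
    exact Real.sqrt_sq (mul_nonneg hqR.le (Real.sqrt_nonneg _))
  -- put everything together
  have hfinal : norm (∑ ψ ∈ Finset.univ.erase 0, E ψ) / (q : ℝ)
      ≤ Real.sqrt ((q : ℝ) * (a * b)) := by
    have h5 : norm (∑ ψ ∈ Finset.univ.erase 0, E ψ)
        ≤ Real.sqrt q * ((q : ℝ) * Real.sqrt (a * b)) := by
      refine htri.trans (hsum1.trans ?_)
      exact mul_le_mul_of_nonneg_left hCS' (Real.sqrt_nonneg _)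
    rw [div_le_iff₀ hqR]
    calc norm (∑ ψ ∈ Finset.univ.erase 0, E ψ)
        ≤ Real.sqrt q * ((q : ℝ) * Real.sqrt (a * b)) := h5
      _ = (Real.sqrt q * Real.sqrt (a * b)) * (q : ℝ) := by ring
      _ = Real.sqrt ((q : ℝ) * (a * b)) * (q : ℝ) := by
          rw [Real.sqrt_mul (by positivity : (0:ℝ) ≤ (q:ℝ))]
  refine hfinal.trans ?_
  linarith [Real.sqrt_nonneg ((q : ℝ) * (a * b))]
end

section
/- Let q be a prime power, let X₁, X₂ ⊆ F_q^* and X₃, X₄ ⊆ F_q. Then the number S of quadruples (x₁, x₂, x₃, x₄) ∈ X₁ × X₂ × X₃ × X₄ with x₁·x₂ = x₃ + x₄ satisfies |S − |X₁||X₂||X₃||X₄|/q| ≤ 2·√(q·|X₁||X₂||X₃||X₄|). -/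
open Finset Complex

section Aux

variable {F : Type*} [Field F] [Fintype F] [DecidableEq F] {ψ : AddChar F ℂ}

lemma exists_psi (F : Type*) [Field F] [Fintype F] :
    ∃ ψ : AddChar F ℂ, ψ.IsPrimitive ∧ ∀ x, ‖ψ x‖ = 1 := by
  have hp : (ringChar F).Prime := CharP.char_is_prime F _
  have hne : ringChar ℂ ≠ ringChar F := by
    rw [ringChar.eq_zero]
    exact fun h => hp.ne_zero h.symm
  let P := AddChar.FiniteField.primitiveChar F ℂ hne
  have : FiniteDimensional ℂ (CyclotomicField P.n ℂ) :=
    IsCyclotomicExtension.finiteDimensional {(P.n : ℕ)} ℂ _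
  have : Algebra.IsAlgebraic ℂ (CyclotomicField P.n ℂ) := Algebra.IsAlgebraic.of_finite _ _
  let f : CyclotomicField P.n ℂ →ₐ[ℂ] ℂ := IsAlgClosed.lift
  have hf : Function.Injective f := f.toRingHom.injective
  refine ⟨(f : CyclotomicField P.n ℂ →* ℂ).compAddChar P.char,
    P.prim.compMulHom_of_isPrimitive hf, fun x => ?_⟩
  have hpow : ((f : CyclotomicField P.n ℂ →* ℂ).compAddChar P.char) x ^ ringChar F = 1 := by
    rw [← AddChar.map_nsmul_eq_pow]
    have : (ringChar F) • x = 0 := by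
      simp [nsmul_eq_mul, CharP.cast_eq_zero F (ringChar F)]
    rw [this, AddChar.map_zero_eq_one]
  exact Complex.norm_eq_one_of_pow_eq_one hpow hp.ne_zero

lemma conj_sum (hn : ∀ x : F, ‖ψ x‖ = 1) (X : Finset F) (t : F) :
    ∑ x ∈ X, ψ (-(t * x)) = (starRingEnd ℂ) (∑ x ∈ X, ψ (t * x)) := by
  rw [map_sum]
  refine Finset.sum_congr rfl fun x _ => ?_
  rw [AddChar.map_neg_eq_inv, Complex.inv_eq_conj (hn _)]

lemma orth_aux (hψ : ψ.IsPrimitive) (hn : ∀ x : F, ‖ψ x‖ = 1) (X : Finset F) :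
    ∑ t : F, ‖∑ x ∈ X, ψ (t * x)‖ ^ 2 = (Fintype.card F : ℝ) * X.card := by
  have key : ∑ t : F, (∑ x ∈ X, ψ (t * x)) * (∑ y ∈ X, ψ (-(t * y)))
      = ((Fintype.card F : ℂ) * X.card) := by
    have h1 : ∀ t : F, (∑ x ∈ X, ψ (t * x)) * (∑ y ∈ X, ψ (-(t * y)))
        = ∑ x ∈ X, ∑ y ∈ X, ψ (t * (x - y)) := by
      intro t
      rw [Finset.sum_mul_sum]
      refine Finset.sum_congr rfl fun x _ => Finset.sum_congr rfl fun y _ => ?_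
      rw [← AddChar.map_add_eq_mul]
      congr 1; ring
    simp_rw [h1]
    rw [Finset.sum_comm]
    have h2 : ∀ x ∈ X, ∑ t : F, ∑ y ∈ X, ψ (t * (x - y)) = (Fintype.card F : ℂ) := by
      intro x hx
      rw [Finset.sum_comm]
      simp_rw [AddChar.sum_mulShift _ hψ, apply_ite (Nat.cast : ℕ → ℂ), Nat.cast_zero,
        sub_eq_zero, Finset.sum_ite_eq]
      simp [hx]
    rw [Finset.sum_congr rfl h2, Finset.sum_const, nsmul_eq_mul, mul_comm]
  have hterm : ∀ t : F, ((‖∑ x ∈ X, ψ (t * x)‖ ^ 2 : ℝ) : ℂ)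
      = (∑ x ∈ X, ψ (t * x)) * (∑ y ∈ X, ψ (-(t * y))) := by
    intro t
    rw [conj_sum hn X t, Complex.mul_conj, Complex.normSq_eq_norm_sq]
  have h5 : ((∑ t : F, ‖∑ x ∈ X, ψ (t * x)‖ ^ 2 : ℝ) : ℂ)
      = (((Fintype.card F : ℝ) * X.card : ℝ) : ℂ) := by
    rw [Complex.ofReal_sum]
    calc ∑ t : F, ((‖∑ x ∈ X, ψ (t * x)‖ ^ 2 : ℝ) : ℂ)
        = ∑ t : F, (∑ x ∈ X, ψ (t * x)) * (∑ y ∈ X, ψ (-(t * y))) :=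
          Finset.sum_congr rfl fun t _ => hterm t
      _ = ((Fintype.card F : ℂ) * X.card) := key
      _ = _ := by push_cast; ring
  exact Complex.ofReal_injective h5

lemma bilinear_aux (hψ : ψ.IsPrimitive) (hn : ∀ x : F, ‖ψ x‖ = 1) (X₁ X₂ : Finset F)
    {t : F} (ht : t ≠ 0) :
    ‖∑ x₁ ∈ X₁, ∑ x₂ ∈ X₂, ψ (t * (x₁ * x₂))‖ ^ 2
      ≤ (X₁.card : ℝ) * ((Fintype.card F : ℝ) * X₂.card) := by
  set g : F → ℝ := fun y => ‖∑ x₂ ∈ X₂, ψ (y * x₂)‖ with hg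
  have h1 : ‖∑ x₁ ∈ X₁, ∑ x₂ ∈ X₂, ψ (t * (x₁ * x₂))‖ ≤ ∑ x₁ ∈ X₁, g (t * x₁) := by
    refine le_trans (norm_sum_le _ _) (le_of_eq (Finset.sum_congr rfl fun x₁ _ => ?_))
    rw [hg]; congr 1
    exact Finset.sum_congr rfl fun x₂ _ => by rw [mul_assoc]
  have h2 : (∑ x₁ ∈ X₁, g (t * x₁)) ^ 2 ≤ (X₁.card : ℝ) * ∑ x₁ ∈ X₁, g (t * x₁) ^ 2 := by
    have := Finset.sum_mul_sq_le_sq_mul_sq X₁ (fun _ => (1 : ℝ)) (fun x₁ => g (t * x₁))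
    simpa using this
  have h3 : ∑ x₁ ∈ X₁, g (t * x₁) ^ 2 ≤ ∑ y : F, g y ^ 2 := by
    have hinj : ∀ a ∈ X₁, ∀ b ∈ X₁, t * a = t * b → a = b := fun a _ b _ h =>
      mul_left_cancel₀ ht h
    calc ∑ x₁ ∈ X₁, g (t * x₁) ^ 2
        = ∑ y ∈ X₁.image (fun a => t * a), g y ^ 2 := (Finset.sum_image (f := fun y => g y ^ 2) hinj).symm
      _ ≤ ∑ y : F, g y ^ 2 := Finset.sum_le_sum_of_subset_of_nonneg
          (Finset.subset_univ _) (fun y _ _ => sq_nonneg _)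
  have h4 : ∑ y : F, g y ^ 2 = (Fintype.card F : ℝ) * X₂.card := orth_aux hψ hn X₂
  calc ‖∑ x₁ ∈ X₁, ∑ x₂ ∈ X₂, ψ (t * (x₁ * x₂))‖ ^ 2
      ≤ (∑ x₁ ∈ X₁, g (t * x₁)) ^ 2 := by
        apply pow_le_pow_left₀ (norm_nonneg _) h1
    _ ≤ (X₁.card : ℝ) * ∑ x₁ ∈ X₁, g (t * x₁) ^ 2 := h2
    _ ≤ (X₁.card : ℝ) * ((Fintype.card F : ℝ) * X₂.card) := by
        rw [← h4]
        exact mul_le_mul_of_nonneg_left h3 (Nat.cast_nonneg _)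

end Aux

set_option maxHeartbeats 2000000 in
/-- **Sárközy.** Let `q` be a prime power, `X₁, X₂ ⊆ F_q^*`,
`X₃, X₄ ⊆ F_q`. The number `S` of quadruples `(x₁,x₂,x₃,x₄) ∈ X₁ × X₂ × X₃ × X₄`
with `x₁·x₂ = x₃ + x₄` satisfies `|S − |X₁||X₂||X₃||X₄|/q| ≤ 2√(q·|X₁||X₂||X₃||X₄|)`. -/
theorem solutions_product_eq_sum {F : Type*} [Field F] [Fintype F] [DecidableEq F]
    (X₁ X₂ X₃ X₄ : Finset F) (h₁ : (0 : F) ∉ X₁) (h₂ : (0 : F) ∉ X₂) :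
    |(((X₁ ×ˢ X₂ ×ˢ X₃ ×ˢ X₄).filter (fun t : F × F × F × F =>
          t.1 * t.2.1 = t.2.2.1 + t.2.2.2)).card : ℝ)
        - (X₁.card : ℝ) * X₂.card * X₃.card * X₄.card / (Fintype.card F : ℝ)|
      ≤ 2 * Real.sqrt ((Fintype.card F : ℝ)
          * ((X₁.card : ℝ) * X₂.card * X₃.card * X₄.card)) := by
  obtain ⟨ψ, hψ, hn⟩ := exists_psi F
  set q : ℝ := (Fintype.card F : ℝ) with hqdef
  have hq : 0 < q := by positivity
  set A : F → ℂ := fun t => ∑ x₁ ∈ X₁, ∑ x₂ ∈ X₂, ψ (t * (x₁ * x₂)) with hA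
  set B : F → ℂ := fun t => ∑ x ∈ X₃, ψ (-(t * x)) with hB
  set C : F → ℂ := fun t => ∑ x ∈ X₄, ψ (-(t * x)) with hC
  set T := (X₁ ×ˢ X₂ ×ˢ X₃ ×ˢ X₄).filter (fun t : F × F × F × F =>
      t.1 * t.2.1 = t.2.2.1 + t.2.2.2) with hT
  -- Step 1: key identity
  have key : (Fintype.card F : ℂ) * (T.card : ℂ) = ∑ t : F, A t * B t * C t := by
    calc (Fintype.card F : ℂ) * (T.card : ℂ)
        = ∑ p ∈ X₁ ×ˢ X₂ ×ˢ X₃ ×ˢ X₄,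
            (if p.1 * p.2.1 = p.2.2.1 + p.2.2.2 then (Fintype.card F : ℂ) else 0) := by
          rw [hT, ← Finset.sum_boole, Finset.mul_sum]
          exact Finset.sum_congr rfl fun p _ => by rw [mul_ite, mul_one, mul_zero]
      _ = ∑ p ∈ X₁ ×ˢ X₂ ×ˢ X₃ ×ˢ X₄,
            ∑ t : F, ψ (t * (p.1 * p.2.1 - p.2.2.1 - p.2.2.2)) := by
          refine Finset.sum_congr rfl fun p _ => ?_
          rw [AddChar.sum_mulShift _ hψ]
          simp only [sub_sub, sub_eq_zero, apply_ite (Nat.cast : ℕ → ℂ), Nat.cast_zero]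
      _ = ∑ t : F, ∑ p ∈ X₁ ×ˢ X₂ ×ˢ X₃ ×ˢ X₄,
            ψ (t * (p.1 * p.2.1 - p.2.2.1 - p.2.2.2)) := Finset.sum_comm
      _ = ∑ t : F, A t * B t * C t := by
          refine Finset.sum_congr rfl fun t _ => ?_
          have hsplit : ∀ x₁ x₂ x₃ x₄ : F, ψ (t * (x₁ * x₂ - x₃ - x₄))
              = ψ (t * (x₁ * x₂)) * (ψ (-(t * x₃)) * ψ (-(t * x₄))) := by
            intro x₁ x₂ x₃ x₄
            rw [← AddChar.map_add_eq_mul, ← AddChar.map_add_eq_mul]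
            congr 1; ring
          have perm : ∀ G : F → F → F → F → ℂ,
              ∑ x₃ ∈ X₃, ∑ x₄ ∈ X₄, ∑ x₁ ∈ X₁, ∑ x₂ ∈ X₂, G x₁ x₂ x₃ x₄
                = ∑ x₁ ∈ X₁, ∑ x₂ ∈ X₂, ∑ x₃ ∈ X₃, ∑ x₄ ∈ X₄, G x₁ x₂ x₃ x₄ := by
            intro G
            calc ∑ x₃ ∈ X₃, ∑ x₄ ∈ X₄, ∑ x₁ ∈ X₁, ∑ x₂ ∈ X₂, G x₁ x₂ x₃ x₄
                = ∑ x₃ ∈ X₃, ∑ x₁ ∈ X₁, ∑ x₄ ∈ X₄, ∑ x₂ ∈ X₂, G x₁ x₂ x₃ x₄ :=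
                  Finset.sum_congr rfl fun x₃ _ => Finset.sum_comm
              _ = ∑ x₁ ∈ X₁, ∑ x₃ ∈ X₃, ∑ x₄ ∈ X₄, ∑ x₂ ∈ X₂, G x₁ x₂ x₃ x₄ :=
                  Finset.sum_comm
              _ = ∑ x₁ ∈ X₁, ∑ x₃ ∈ X₃, ∑ x₂ ∈ X₂, ∑ x₄ ∈ X₄, G x₁ x₂ x₃ x₄ :=
                  Finset.sum_congr rfl fun _ _ => Finset.sum_congr rfl fun _ _ =>
                    Finset.sum_comm
              _ = ∑ x₁ ∈ X₁, ∑ x₂ ∈ X₂, ∑ x₃ ∈ X₃, ∑ x₄ ∈ X₄, G x₁ x₂ x₃ x₄ :=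
                  Finset.sum_congr rfl fun _ _ => Finset.sum_comm
          have hRHS : A t * B t * C t = ∑ x₃ ∈ X₃, ∑ x₄ ∈ X₄, ∑ x₁ ∈ X₁, ∑ x₂ ∈ X₂,
              ψ (t * (x₁ * x₂)) * (ψ (-(t * x₃)) * ψ (-(t * x₄))) := by
            simp only [hA, hB, hC]
            rw [mul_assoc, Finset.sum_mul_sum, Finset.mul_sum]
            refine Finset.sum_congr rfl fun x₃ _ => ?_
            rw [Finset.mul_sum]
            refine Finset.sum_congr rfl fun x₄ _ => ?_
            rw [Finset.sum_mul]
            refine Finset.sum_congr rfl fun x₁ _ => ?_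
            rw [Finset.sum_mul]
          rw [hRHS, perm]
          simp_rw [Finset.sum_product]
          exact Finset.sum_congr rfl fun x₁ _ => Finset.sum_congr rfl fun x₂ _ =>
            Finset.sum_congr rfl fun x₃ _ => Finset.sum_congr rfl fun x₄ _ => hsplit _ _ _ _
  -- values at 0
  have hA0 : A 0 = (X₁.card : ℂ) * X₂.card := by
    simp only [hA]
    simp [zero_mul, AddChar.map_zero_eq_one, Finset.sum_const, nsmul_eq_mul, mul_one]
  have hB0 : B 0 = (X₃.card : ℂ) := by
    simp only [hB]
    simp [zero_mul, AddChar.map_zero_eq_one, Finset.sum_const, nsmul_eq_mul, mul_one]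
  have hC0 : C 0 = (X₄.card : ℂ) := by
    simp only [hC]
    simp [zero_mul, AddChar.map_zero_eq_one, Finset.sum_const, nsmul_eq_mul, mul_one]
  have hsplit0 : (Fintype.card F : ℂ) * (T.card : ℂ)
      - (X₁.card : ℂ) * X₂.card * X₃.card * X₄.card
      = ∑ t ∈ Finset.univ.erase 0, A t * B t * C t := by
    rw [key, ← Finset.add_sum_erase _ _ (Finset.mem_univ (0 : F)), hA0, hB0, hC0]
    ring
  -- Step 3: bounds
  have hBnorm : ∀ t : F, ‖B t‖ = ‖∑ x ∈ X₃, ψ (t * x)‖ := fun t => by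
    rw [hB]; simp only []
    rw [conj_sum hn X₃ t]; exact RCLike.norm_conj _
  have hCnorm : ∀ t : F, ‖C t‖ = ‖∑ x ∈ X₄, ψ (t * x)‖ := fun t => by
    rw [hC]; simp only []
    rw [conj_sum hn X₄ t]; exact RCLike.norm_conj _
  have hBsq : ∑ t : F, ‖B t‖ ^ 2 = q * X₃.card := by
    simp_rw [hBnorm]; exact orth_aux hψ hn X₃
  have hCsq : ∑ t : F, ‖C t‖ ^ 2 = q * X₄.card := by
    simp_rw [hCnorm]; exact orth_aux hψ hn X₄
  have hBC : ∑ t ∈ Finset.univ.erase 0, ‖B t‖ * ‖C t‖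
      ≤ Real.sqrt (q * X₃.card) * Real.sqrt (q * X₄.card) := by
    have h := Finset.sum_mul_sq_le_sq_mul_sq (Finset.univ.erase 0)
      (fun t => ‖B t‖) (fun t => ‖C t‖)
    have hb : ∑ t ∈ Finset.univ.erase 0, ‖B t‖ ^ 2 ≤ q * X₃.card := by
      rw [← hBsq]
      exact Finset.sum_le_sum_of_subset_of_nonneg (Finset.subset_univ _)
        (fun y _ _ => sq_nonneg _)
    have hc : ∑ t ∈ Finset.univ.erase 0, ‖C t‖ ^ 2 ≤ q * X₄.card := by
      rw [← hCsq]
      exact Finset.sum_le_sum_of_subset_of_nonneg (Finset.subset_univ _)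
        (fun y _ _ => sq_nonneg _)
    have hnonneg : (0 : ℝ) ≤ ∑ t ∈ Finset.univ.erase 0, ‖B t‖ * ‖C t‖ :=
      Finset.sum_nonneg fun t _ => mul_nonneg (norm_nonneg _) (norm_nonneg _)
    have hsq : (∑ t ∈ Finset.univ.erase 0, ‖B t‖ * ‖C t‖) ^ 2
        ≤ (q * X₃.card) * (q * X₄.card) := by
      refine le_trans h (mul_le_mul hb hc ?_ ?_)
      · exact Finset.sum_nonneg fun t _ => sq_nonneg _
      · positivity
    calc ∑ t ∈ Finset.univ.erase 0, ‖B t‖ * ‖C t‖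
        = Real.sqrt ((∑ t ∈ Finset.univ.erase 0, ‖B t‖ * ‖C t‖) ^ 2) :=
          (Real.sqrt_sq hnonneg).symm
      _ ≤ Real.sqrt ((q * X₃.card) * (q * X₄.card)) := Real.sqrt_le_sqrt hsq
      _ = Real.sqrt (q * X₃.card) * Real.sqrt (q * X₄.card) := Real.sqrt_mul (by positivity) _
  have hAbound : ∀ t ∈ Finset.univ.erase (0 : F),
      ‖A t‖ ≤ Real.sqrt ((X₁.card : ℝ) * (q * X₂.card)) := by
    intro t ht
    have ht0 : t ≠ 0 := (Finset.mem_erase.1 ht).1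
    have hb := bilinear_aux hψ hn X₁ X₂ ht0
    exact (Real.le_sqrt (norm_nonneg _) (by positivity)).2 hb
  have hE : ‖∑ t ∈ Finset.univ.erase 0, A t * B t * C t‖
      ≤ Real.sqrt ((X₁.card : ℝ) * (q * X₂.card))
        * (Real.sqrt (q * X₃.card) * Real.sqrt (q * X₄.card)) := by
    calc ‖∑ t ∈ Finset.univ.erase 0, A t * B t * C t‖
        ≤ ∑ t ∈ Finset.univ.erase 0, ‖A t * B t * C t‖ := norm_sum_le _ _
      _ = ∑ t ∈ Finset.univ.erase 0, ‖A t‖ * (‖B t‖ * ‖C t‖) := by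
          refine Finset.sum_congr rfl fun t _ => ?_
          rw [norm_mul, norm_mul, mul_assoc]
      _ ≤ ∑ t ∈ Finset.univ.erase 0,
            Real.sqrt ((X₁.card : ℝ) * (q * X₂.card)) * (‖B t‖ * ‖C t‖) := by
          refine Finset.sum_le_sum fun t ht => ?_
          exact mul_le_mul_of_nonneg_right (hAbound t ht)
            (mul_nonneg (norm_nonneg _) (norm_nonneg _))
      _ = Real.sqrt ((X₁.card : ℝ) * (q * X₂.card))
            * ∑ t ∈ Finset.univ.erase 0, ‖B t‖ * ‖C t‖ := by rw [Finset.mul_sum]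
      _ ≤ _ := mul_le_mul_of_nonneg_left hBC (Real.sqrt_nonneg _)
  -- Step 4: assemble
  set P : ℝ := (X₁.card : ℝ) * X₂.card * X₃.card * X₄.card with hPdef
  have hP : 0 ≤ P := by positivity
  have hsqrtprod : Real.sqrt ((X₁.card : ℝ) * (q * X₂.card))
      * (Real.sqrt (q * X₃.card) * Real.sqrt (q * X₄.card)) = q * Real.sqrt (q * P) := by
    rw [← Real.sqrt_mul (by positivity), ← Real.sqrt_mul (by positivity)]
    rw [show (X₁.card : ℝ) * (q * X₂.card) * (q * X₃.card * (q * X₄.card))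
        = q ^ 2 * (q * P) by rw [hPdef]; ring]
    rw [Real.sqrt_mul (sq_nonneg q), Real.sqrt_sq hq.le]
  have hcast : (((q * T.card - P : ℝ)) : ℂ)
      = (Fintype.card F : ℂ) * (T.card : ℂ)
        - (X₁.card : ℂ) * X₂.card * X₃.card * X₄.card := by
    rw [hqdef, hPdef]; push_cast; ring
  have hreal : |q * T.card - P| ≤ q * Real.sqrt (q * P) := by
    have h1 : |q * T.card - P| = ‖(((q * T.card - P : ℝ)) : ℂ)‖ := by
      rw [Complex.norm_real, Real.norm_eq_abs]
    rw [h1, hcast, hsplit0, ← hsqrtprod]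
    exact hE
  have hfinal : |((T.card : ℝ)) - P / q| ≤ Real.sqrt (q * P) := by
    have h2 : ((T.card : ℝ)) - P / q = (q * T.card - P) / q := by
      field_simp
    rw [h2, abs_div, abs_of_pos hq]
    rw [div_le_iff₀ hq]
    calc |q * T.card - P| ≤ q * Real.sqrt (q * P) := hreal
      _ = Real.sqrt (q * P) * q := mul_comm _ _
  calc |((T.card : ℝ)) - (X₁.card : ℝ) * X₂.card * X₃.card * X₄.card / (Fintype.card F : ℝ)|
      = |((T.card : ℝ)) - P / q| := by rw [hPdef, hqdef]
    _ ≤ Real.sqrt (q * P) := hfinal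
    _ ≤ 2 * Real.sqrt (q * P) := by nlinarith [Real.sqrt_nonneg (q * P)]
end

section
/- Let q be a prime power, let X₁, X₂ ⊆ F_q^* and X₃, X₄ ⊆ F_q. Then the number S of quadruples (x₁, x₂, x₃, x₄) ∈ X₁ × X₂ × X₃ × X₄ with x₂·x₃ − x₁·x₄ = 1 satisfies |S − |X₁||X₂||X₃||X₄|/q| ≤ 2·√(q·|X₁||X₂||X₃||X₄|). -/
section Aux

open Finset

variable {F : Type*} [Field F] [Fintype F] [DecidableEq F]

lemma count_single (v : F × F) (hv : v ≠ 0) :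
    (univ.filter (fun w : F × F => w.2 * v.1 - w.1 * v.2 = 1)).card = Fintype.card F := by
  rcases eq_or_ne v.1 0 with h1 | h1
  · have h2 : v.2 ≠ 0 := by
      intro h2; exact hv (Prod.ext h1 h2)
    have himg : (univ.filter (fun w : F × F => w.2 * v.1 - w.1 * v.2 = 1))
        = univ.image (fun t : F => ((-v.2⁻¹ : F), t)) := by
      ext w
      simp only [mem_filter, mem_univ, true_and, mem_image, h1, mul_zero, zero_sub]
      constructor
      · intro h
        refine ⟨w.2, ?_⟩
        have hw1 : w.1 = -v.2⁻¹ := by field_simp; linear_combination -h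
        rw [← hw1]
      · rintro ⟨t, rfl⟩
        simp
        field_simp
    rw [himg, card_image_of_injective _ (fun a b h => by simpa using h), card_univ]
  · have himg : (univ.filter (fun w : F × F => w.2 * v.1 - w.1 * v.2 = 1))
      = univ.image (fun t : F => (t, (1 + t * v.2) / v.1)) := by
      ext w
      simp only [mem_filter, mem_univ, true_and, mem_image]
      constructor
      · intro h
        refine ⟨w.1, ?_⟩
        have hw2 : w.2 = (1 + w.1 * v.2) / v.1 := by field_simp; linear_combination h
        rw [← hw2]
      · rintro ⟨t, rfl⟩
        simp only
        field_simp
        ring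
    rw [himg, card_image_of_injective _ (fun a b h => congrArg Prod.fst h), card_univ]

lemma count_pair (v v' : F × F) (hvv : v ≠ v') :
    (univ.filter (fun w : F × F =>
      w.2 * v.1 - w.1 * v.2 = 1 ∧ w.2 * v'.1 - w.1 * v'.2 = 1)).card ≤ 1 := by
  apply card_le_one.mpr
  intro a ha b hb
  simp only [mem_filter, mem_univ, true_and] at ha hb
  obtain ⟨h1, h3⟩ := ha
  obtain ⟨h2, h4⟩ := hb
  by_contra hab
  apply hvv
  have e5 : (a.2 - b.2) * v.1 = (a.1 - b.1) * v.2 := by linear_combination h1 - h2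
  have e6 : (a.2 - b.2) * v'.1 = (a.1 - b.1) * v'.2 := by linear_combination h3 - h4
  rcases eq_or_ne (a.2 - b.2) 0 with ht | ht
  · have hs : a.1 - b.1 ≠ 0 := by
      intro hs0
      exact hab (Prod.ext (by linear_combination hs0) (by linear_combination ht))
    have hv2 : v.2 = 0 := by
      have := e5; rw [ht, zero_mul] at this
      exact (mul_eq_zero.mp this.symm).resolve_left hs
    have hv2' : v'.2 = 0 := by
      have := e6; rw [ht, zero_mul] at this
      exact (mul_eq_zero.mp this.symm).resolve_left hs
    have ha2 : a.2 ≠ 0 := by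
      intro h0
      rw [h0, hv2] at h1; simp at h1
    refine Prod.ext ?_ (by rw [hv2, hv2'])
    have : a.2 * v.1 = a.2 * v'.1 := by
      rw [hv2] at h1; rw [hv2'] at h3
      linear_combination h1 - h3
    exact mul_left_cancel₀ ha2 this
  · set s := a.1 - b.1 with hs
    set t := a.2 - b.2 with htdef
    have hk : a.2 * s - a.1 * t ≠ 0 := by
      intro hk0
      -- then from h1 scaled: t = v.2 * (a.2*s - a.1*t)?? derive contradiction
      -- t * 1 = t * (a.2*v.1 - a.1*v.2) = a.2*(t*v.1) - a.1*(t*v.2)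
      --       = a.2*(s*v.2) - a.1*(t*v.2) = v.2*(a.2*s - a.1*t) = 0
      have : t = 0 := by linear_combination -t * h1 + a.2 * e5 + v.2 * hk0
      exact ht this
    have hb2 : v.2 * (a.2 * s - a.1 * t) = t := by
      linear_combination t * h1 - a.2 * e5
    have hb2' : v'.2 * (a.2 * s - a.1 * t) = t := by
      linear_combination t * h3 - a.2 * e6
    have hveq2 : v.2 = v'.2 := by
      have := hb2.trans hb2'.symm
      exact mul_right_cancel₀ hk this
    refine Prod.ext ?_ hveq2
    have : t * v.1 = t * v'.1 := by rw [e5, e6, hveq2]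
    exact mul_left_cancel₀ ht this

lemma sum_N (P : Finset (F × F)) :
    ∑ w : F × F, (P.filter (fun v => w.2 * v.1 - w.1 * v.2 = 1)).card
      = (P.erase 0).card * Fintype.card F := by
  simp_rw [card_filter]
  rw [Finset.sum_comm]
  have key : ∀ v : F × F,
      (∑ w : F × F, if w.2 * v.1 - w.1 * v.2 = 1 then 1 else 0)
        = if v = 0 then 0 else Fintype.card F := by
    intro v
    rw [← card_filter]
    split_ifs with h
    · subst h; simp
    · exact count_single v h
  calc ∑ v ∈ P, ∑ w : F × F, (if w.2 * v.1 - w.1 * v.2 = 1 then 1 else 0)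
      = ∑ v ∈ P, if v = 0 then 0 else Fintype.card F := by
        exact Finset.sum_congr rfl fun v _ => key v
    _ = ∑ v ∈ P.erase 0, if v = 0 then 0 else Fintype.card F := by
        rw [Finset.sum_erase _ (by simp)]
    _ = ∑ v ∈ P.erase 0, Fintype.card F := by
        refine Finset.sum_congr rfl fun v hv => ?_
        rw [if_neg (Finset.mem_erase.mp hv).1]
    _ = (P.erase 0).card * Fintype.card F := by
        rw [Finset.sum_const, smul_eq_mul]

lemma sum_N_sq (P : Finset (F × F)) :
    ∑ w : F × F, ((P.filter (fun v => w.2 * v.1 - w.1 * v.2 = 1)).card)^2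
      ≤ (P.erase 0).card * (Fintype.card F + (P.erase 0).card) := by
  have step : ∑ w : F × F, ((P.filter (fun v => w.2 * v.1 - w.1 * v.2 = 1)).card)^2
      = ∑ v ∈ P, ∑ v' ∈ P, (univ.filter (fun w : F × F =>
          w.2 * v.1 - w.1 * v.2 = 1 ∧ w.2 * v'.1 - w.1 * v'.2 = 1)).card := by
    simp_rw [card_filter, sq, Finset.sum_mul_sum]
    rw [Finset.sum_comm]
    refine Finset.sum_congr rfl fun v _ => ?_
    rw [Finset.sum_comm]
    refine Finset.sum_congr rfl fun v' _ => ?_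
    refine Finset.sum_congr rfl fun w _ => ?_
    split_ifs <;> simp_all
  rw [step]
  have hzero : ∀ v' : F × F, ∀ u : F × F, u = 0 →
      (univ.filter (fun w : F × F =>
        w.2 * u.1 - w.1 * u.2 = 1 ∧ w.2 * v'.1 - w.1 * v'.2 = 1)).card = 0 := by
    intro v' u hu; subst hu; simp
  calc ∑ v ∈ P, ∑ v' ∈ P, (univ.filter (fun w : F × F =>
          w.2 * v.1 - w.1 * v.2 = 1 ∧ w.2 * v'.1 - w.1 * v'.2 = 1)).card
      = ∑ v ∈ P.erase 0, ∑ v' ∈ P, (univ.filter (fun w : F × F =>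
          w.2 * v.1 - w.1 * v.2 = 1 ∧ w.2 * v'.1 - w.1 * v'.2 = 1)).card := by
        rw [Finset.sum_erase _ (by simp)]
    _ ≤ ∑ v ∈ P.erase 0, (Fintype.card F + (P.erase 0).card) := by
        refine Finset.sum_le_sum fun v hv => ?_
        have hv0 : v ≠ 0 := (Finset.mem_erase.mp hv).1
        have hvP : v ∈ P := (Finset.mem_erase.mp hv).2
        calc ∑ v' ∈ P, (univ.filter (fun w : F × F =>
              w.2 * v.1 - w.1 * v.2 = 1 ∧ w.2 * v'.1 - w.1 * v'.2 = 1)).card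
            = ∑ v' ∈ P.erase 0, (univ.filter (fun w : F × F =>
              w.2 * v.1 - w.1 * v.2 = 1 ∧ w.2 * v'.1 - w.1 * v'.2 = 1)).card := by
              rw [Finset.sum_erase _ (by simp)]
          _ = (univ.filter (fun w : F × F =>
                w.2 * v.1 - w.1 * v.2 = 1 ∧ w.2 * v.1 - w.1 * v.2 = 1)).card
              + ∑ v' ∈ (P.erase 0).erase v, (univ.filter (fun w : F × F =>
                w.2 * v.1 - w.1 * v.2 = 1 ∧ w.2 * v'.1 - w.1 * v'.2 = 1)).card := by
              exact (Finset.add_sum_erase (P.erase 0) (fun v' => (univ.filter (fun w : F × F =>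
                w.2 * v.1 - w.1 * v.2 = 1 ∧ w.2 * v'.1 - w.1 * v'.2 = 1)).card)
                (Finset.mem_erase.mpr ⟨hv0, hvP⟩)).symm
          _ ≤ Fintype.card F + (P.erase 0).card := by
              gcongr
              · apply le_of_eq
                rw [← count_single v hv0]
                congr 1
                ext w
                simp [and_self]
              · calc ∑ v' ∈ (P.erase 0).erase v, (univ.filter (fun w : F × F =>
                    w.2 * v.1 - w.1 * v.2 = 1 ∧ w.2 * v'.1 - w.1 * v'.2 = 1)).card
                    ≤ ∑ v' ∈ (P.erase 0).erase v, 1 := by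
                      refine Finset.sum_le_sum fun v' hv' => ?_
                      exact count_pair v v' (Ne.symm (Finset.mem_erase.mp hv').1)
                  _ ≤ (P.erase 0).card := by
                      rw [Finset.sum_const, smul_eq_mul, mul_one]
                      exact Finset.card_le_card (Finset.erase_subset _ _)
    _ = (P.erase 0).card * (Fintype.card F + (P.erase 0).card) := by
        rw [Finset.sum_const, smul_eq_mul]

lemma variance_bound (P : Finset (F × F)) :
    ∑ w : F × F, (((P.filter (fun v => w.2 * v.1 - w.1 * v.2 = 1)).card : ℝ)
        - (P.card : ℝ) / (Fintype.card F : ℝ))^2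
      ≤ (Fintype.card F : ℝ) * (P.card : ℝ) := by
  set q : ℝ := (Fintype.card F : ℝ) with hqdef
  have hq : 1 ≤ q := by
    have := Fintype.card_pos (α := F)
    rw [hqdef]; exact_mod_cast this
  have hq0 : q ≠ 0 := by linarith
  set N : F × F → ℝ := fun w => ((P.filter (fun v => w.2 * v.1 - w.1 * v.2 = 1)).card : ℝ)
    with hN
  set p : ℕ := (P.erase 0).card with hp
  set m : ℕ := P.card with hmdef
  have hm : (m : ℝ) = p ∨ (m : ℝ) = p + 1 := by
    by_cases h : (0 : F × F) ∈ P
    · right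
      have h1 : p = m - 1 := Finset.card_erase_of_mem h
      have hm1 : 1 ≤ m := Finset.card_pos.mpr ⟨0, h⟩
      have h2 : m = p + 1 := by omega
      rw [h2]; push_cast; ring
    · left
      rw [hp, Finset.erase_eq_of_notMem h]
  have hsum : ∑ w : F × F, N w = p * q := by
    rw [hN]
    rw [← Nat.cast_sum]
    rw [sum_N P]
    push_cast
    ring
  have hsumsq : ∑ w : F × F, (N w)^2 ≤ p * (q + p) := by
    have := sum_N_sq P
    calc ∑ w : F × F, (N w)^2
        = ((∑ w : F × F, ((P.filter (fun v => w.2 * v.1 - w.1 * v.2 = 1)).card)^2 : ℕ) : ℝ) := by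
          push_cast; rfl
      _ ≤ (((P.erase 0).card * (Fintype.card F + (P.erase 0).card) : ℕ) : ℝ) := by
          exact_mod_cast this
      _ = p * (q + p) := by push_cast; ring
  have expand : ∑ w : F × F, (N w - (m:ℝ)/q)^2
      = (∑ w : F × F, (N w)^2) - 2*((m:ℝ)/q)*(∑ w : F × F, N w)
        + (Fintype.card (F × F) : ℝ)*((m:ℝ)/q)^2 := by
    have h1 : ∀ w : F × F, (N w - (m:ℝ)/q)^2
        = (N w)^2 - 2*((m:ℝ)/q)*(N w) + ((m:ℝ)/q)^2 := fun w => by ring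
    simp_rw [h1]
    rw [Finset.sum_add_distrib, Finset.sum_sub_distrib, ← Finset.mul_sum,
      Finset.sum_const, nsmul_eq_mul, card_univ]
  have hcard2 : (Fintype.card (F × F) : ℝ) = q * q := by
    rw [Fintype.card_prod]; push_cast; ring
  have e1 : 2*((m:ℝ)/q)*((p:ℝ)*q) = 2*(m:ℝ)*(p:ℝ) := by field_simp
  have e2 : q * q * ((m:ℝ)/q)^2 = (m:ℝ)^2 := by field_simp
  rw [expand, hsum, hcard2, e1, e2]
  rcases hm with h | h <;> rw [h] <;> nlinarith [hsumsq, Nat.cast_nonneg (α := ℝ) p]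

end Aux

/-- **Sárközy.** Let `q` be a prime power, `X₁, X₂ ⊆ F_q^*`,
`X₃, X₄ ⊆ F_q`. The number `S` of quadruples `(x₁,x₂,x₃,x₄) ∈ X₁ × X₂ × X₃ × X₄`
with `x₂·x₃ − x₁·x₄ = 1` satisfies
`|S − |X₁||X₂||X₃||X₄|/q| ≤ 2√(q·|X₁||X₂||X₃||X₄|)`. -/
theorem solutions_bilinear_eq_one {F : Type*} [Field F] [Fintype F] [DecidableEq F]
    (X₁ X₂ X₃ X₄ : Finset F) (h₁ : (0 : F) ∉ X₁) (h₂ : (0 : F) ∉ X₂) :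
    |(((X₁ ×ˢ X₂ ×ˢ X₃ ×ˢ X₄).filter (fun t : F × F × F × F =>
          t.2.1 * t.2.2.1 - t.1 * t.2.2.2 = 1)).card : ℝ)
        - (X₁.card : ℝ) * X₂.card * X₃.card * X₄.card / (Fintype.card F : ℝ)|
      ≤ 2 * Real.sqrt ((Fintype.card F : ℝ)
          * ((X₁.card : ℝ) * X₂.card * X₃.card * X₄.card)) := by
  classical
  set q : ℝ := (Fintype.card F : ℝ) with hq
  set P : Finset (F × F) := X₃ ×ˢ X₄ with hP
  set W : Finset (F × F) := X₁ ×ˢ X₂ with hW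
  set f : F × F → ℝ := fun w =>
    ((P.filter (fun v => w.2 * v.1 - w.1 * v.2 = 1)).card : ℝ) - (P.card : ℝ) / q with hf
  have hcount : ((X₁ ×ˢ X₂ ×ˢ X₃ ×ˢ X₄).filter (fun t : F × F × F × F =>
          t.2.1 * t.2.2.1 - t.1 * t.2.2.2 = 1)).card
      = ∑ w ∈ W, (P.filter (fun v => w.2 * v.1 - w.1 * v.2 = 1)).card := by
    rw [hW, hP]
    simp_rw [Finset.card_filter, Finset.sum_product]
  have hWcard : (W.card : ℝ) = (X₁.card : ℝ) * X₂.card := by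
    rw [hW, Finset.card_product]; push_cast; ring
  have hPcard : (P.card : ℝ) = (X₃.card : ℝ) * X₄.card := by
    rw [hP, Finset.card_product]; push_cast; ring
  have hmain : (((X₁ ×ˢ X₂ ×ˢ X₃ ×ˢ X₄).filter (fun t : F × F × F × F =>
          t.2.1 * t.2.2.1 - t.1 * t.2.2.2 = 1)).card : ℝ)
        - (X₁.card : ℝ) * X₂.card * X₃.card * X₄.card / q
      = ∑ w ∈ W, f w := by
    rw [hf]
    rw [Finset.sum_sub_distrib, Finset.sum_const, nsmul_eq_mul]
    rw [hcount]
    push_cast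
    rw [hWcard, hPcard]
    ring
  have hvar := variance_bound (F := F) P
  have key : (∑ w ∈ W, f w)^2
      ≤ q * ((X₁.card : ℝ) * X₂.card * X₃.card * X₄.card) := by
    calc (∑ w ∈ W, f w)^2 ≤ W.card * ∑ w ∈ W, (f w)^2 :=
          sq_sum_le_card_mul_sum_sq
      _ ≤ W.card * ∑ w : F × F, (f w)^2 := by
          refine mul_le_mul_of_nonneg_left ?_ (Nat.cast_nonneg _)
          exact Finset.sum_le_sum_of_subset_of_nonneg (Finset.subset_univ W)
            fun w _ _ => by positivity
      _ ≤ W.card * (q * P.card) := by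
          have hWnn : (0:ℝ) ≤ (W.card : ℝ) := Nat.cast_nonneg _
          exact mul_le_mul_of_nonneg_left hvar hWnn
      _ = q * ((X₁.card : ℝ) * X₂.card * X₃.card * X₄.card) := by
          rw [hWcard, hPcard]; ring
  rw [hmain]
  have h1 : |∑ w ∈ W, f w|
      ≤ Real.sqrt (q * ((X₁.card : ℝ) * X₂.card * X₃.card * X₄.card)) := by
    rw [← Real.sqrt_sq_eq_abs]
    exact Real.sqrt_le_sqrt key
  have h2 : (0:ℝ) ≤ Real.sqrt (q * ((X₁.card : ℝ) * X₂.card * X₃.card * X₄.card)) :=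
    Real.sqrt_nonneg _
  linarith
end

section
/- Let G be a finite abelian group and let A ⊆ G be a Sidon set with |A| ≥ √|G| − 1. For X ⊆ G write E(X) = |A ∩ X| − |A||X|/|G|. Then for every subset B ⊆ G and every nonempty subset C ⊆ G there exists c ∈ C such that |E(B)| ≤ 2·√(√|G| · |B|/|C|) + |E(B \ (B + c))| + |E((B + c) \ B)|, where B + c = {b + c : b ∈ B}. -/
open Finset

set_option linter.unusedSectionVars false

section SidonHelpers

variable {G : Type*} [AddCommGroup G] [Fintype G] [DecidableEq G]


lemma inter_image_card (A B : Finset G) (x : G) :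
    (A ∩ B.image (· + x)).card = (B.filter fun b => b + x ∈ A).card := by
  have h : A ∩ B.image (· + x) = (B.filter fun b => b + x ∈ A).image (· + x) := by
    ext y
    simp only [mem_inter, mem_image, mem_filter]
    constructor
    · rintro ⟨hy, b, hb, rfl⟩
      exact ⟨b, ⟨hb, hy⟩, rfl⟩
    · rintro ⟨b, ⟨hb, hbA⟩, rfl⟩
      exact ⟨hbA, b, hb, rfl⟩
  rw [h, card_image_of_injective _ (add_left_injective x)]

lemma filter_shift_card (A : Finset G) (b : G) :
    ((univ : Finset G).filter fun x => b + x ∈ A).card = A.card := by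
  have h : (univ : Finset G).filter (fun x => b + x ∈ A) = A.image (fun a => a - b) := by
    ext x
    simp only [mem_filter, mem_univ, true_and, mem_image]
    constructor
    · intro hx; exact ⟨b + x, hx, by abel⟩
    · rintro ⟨a, ha, rfl⟩; simpa using ha
  rw [h, card_image_of_injective]
  intro u v h; simpa using h

lemma sum_card_inter (A B : Finset G) :
    ∑ x : G, (A ∩ B.image (· + x)).card = A.card * B.card := by
  simp_rw [inter_image_card, card_filter]
  rw [Finset.sum_comm]
  have : ∀ b ∈ B, ∑ x : G, (if b + x ∈ A then 1 else 0) = A.card := by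
    intro b _
    rw [← card_filter]
    exact filter_shift_card A b
  rw [Finset.sum_congr rfl this, Finset.sum_const, smul_eq_mul, mul_comm]

lemma sum_sq_card_inter (A B : Finset G)
    (hA : ∀ a ∈ A, ∀ b ∈ A, ∀ c ∈ A, ∀ d ∈ A,
      a - b = c - d → a - b ≠ 0 → a = c ∧ b = d) :
    ∑ x : G, ((A ∩ B.image (· + x)).card) ^ 2
      ≤ A.card * B.card + B.card * B.card := by
  have key : ∀ x : G, ((A ∩ B.image (· + x)).card) ^ 2
      = ∑ b ∈ B, ∑ b' ∈ B, (if b + x ∈ A ∧ b' + x ∈ A then 1 else 0) := by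
    intro x
    rw [inter_image_card, card_filter, sq, Finset.sum_mul_sum]
    refine Finset.sum_congr rfl fun b _ => Finset.sum_congr rfl fun b' _ => ?_
    by_cases h1 : b + x ∈ A <;> by_cases h2 : b' + x ∈ A <;> simp [h1, h2]
  simp_rw [key]
  rw [Finset.sum_comm]
  have step : ∀ b ∈ B, ∑ x : G, ∑ b' ∈ B, (if b + x ∈ A ∧ b' + x ∈ A then 1 else 0)
      ≤ A.card + B.card := by
    intro b hb
    rw [Finset.sum_comm]
    have bound : ∀ b' ∈ B, ∑ x : G, (if b + x ∈ A ∧ b' + x ∈ A then 1 else 0)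
        ≤ (if b = b' then A.card else 0) + 1 := by
      intro b' _
      by_cases hbb : b = b'
      · subst hbb
        simp only [if_pos rfl]
        have : ∑ x : G, (if b + x ∈ A ∧ b + x ∈ A then 1 else 0) = A.card := by
          simp_rw [and_self]
          rw [← card_filter]
          exact filter_shift_card A b
        rw [this]; simp
      · simp only [if_neg hbb, zero_add]
        rw [← card_filter]
        apply Finset.card_le_one.2
        intro x hx y hy
        simp only [mem_filter, mem_univ, true_and] at hx hy
        have hd : (b + x) - (b' + x) = (b + y) - (b' + y) := by abel
        have hnz : (b + x) - (b' + x) ≠ 0 := by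
          simpa [sub_ne_zero] using hbb
        have := hA _ hx.1 _ hx.2 _ hy.1 _ hy.2 hd hnz
        have := this.1
        exact add_left_cancel this
    calc ∑ b' ∈ B, ∑ x : G, (if b + x ∈ A ∧ b' + x ∈ A then 1 else 0)
        ≤ ∑ b' ∈ B, ((if b = b' then A.card else 0) + 1) := Finset.sum_le_sum bound
      _ = A.card + B.card := by
          rw [Finset.sum_add_distrib, Finset.sum_const, Finset.sum_ite_eq, if_pos hb,
            smul_eq_mul, mul_one]
  calc ∑ b ∈ B, ∑ x : G, ∑ b' ∈ B, (if b + x ∈ A ∧ b' + x ∈ A then 1 else 0)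
      ≤ ∑ _b ∈ B, (A.card + B.card) := Finset.sum_le_sum step
    _ = A.card * B.card + B.card * B.card := by
        rw [Finset.sum_const, smul_eq_mul]; ring


lemma sidon_card_le (A : Finset G)
    (hA : ∀ a ∈ A, ∀ b ∈ A, ∀ c ∈ A, ∀ d ∈ A,
      a - b = c - d → a - b ≠ 0 → a = c ∧ b = d) :
    (A.card : ℝ) ≤ Real.sqrt (Fintype.card G) + 1 := by
  have hinj : A.offDiag.card ≤ ((univ : Finset G).erase 0).card := by
    apply Finset.card_le_card_of_injOn (fun p => p.1 - p.2)
    · intro p hp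
      rw [Finset.mem_coe, Finset.mem_offDiag] at hp
      exact Finset.mem_erase.2 ⟨sub_ne_zero.2 hp.2.2, mem_univ _⟩
    · intro p hp q hq hpq
      rw [Finset.mem_coe, Finset.mem_offDiag] at hp hq
      have := hA p.1 hp.1 p.2 hp.2.1 q.1 hq.1 q.2 hq.2.1 hpq (sub_ne_zero.2 hp.2.2)
      exact Prod.ext this.1 this.2
  rw [Finset.offDiag_card, Finset.card_erase_of_mem (mem_univ 0), Finset.card_univ] at hinj
  have hn1 : 1 ≤ Fintype.card G := Fintype.card_pos
  have hnat : A.card * A.card ≤ Fintype.card G - 1 + A.card := by omega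
  have hreal : (A.card : ℝ) * A.card ≤ (Fintype.card G : ℝ) - 1 + A.card := by
    have := (Nat.cast_le (α := ℝ)).2 hnat
    push_cast [Nat.cast_sub hn1] at this
    linarith
  set s : ℝ := Real.sqrt (Fintype.card G) with hs
  have hs2 : s ^ 2 = (Fintype.card G : ℝ) := Real.sq_sqrt (by positivity)
  have hs1 : 1 ≤ s := by
    rw [hs, show (1:ℝ) = Real.sqrt 1 by simp]
    exact Real.sqrt_le_sqrt (by exact_mod_cast hn1)
  have ha0 : (0:ℝ) ≤ A.card := Nat.cast_nonneg _
  nlinarith [sq_nonneg ((A.card : ℝ) - s), sq_nonneg ((A.card : ℝ) + s)]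

end SidonHelpers

set_option maxHeartbeats 1000000 in
/-- Let `G` be a finite abelian group and `A ⊆ G` a Sidon set with
`|A| ≥ √|G| − 1`. With `E(X) = |A ∩ X| − |A||X|/|G|`, for every `B ⊆ G` and every
nonempty `C ⊆ G` there is `c ∈ C` with
`|E(B)| ≤ 2·√(√|G|·|B|/|C|) + |E(B \ (B+c))| + |E((B+c) \ B)|`. -/
theorem sidon_translate_error_bound {G : Type*} [AddCommGroup G] [Fintype G]
    [DecidableEq G] (A : Finset G)
    (hA : ∀ a ∈ A, ∀ b ∈ A, ∀ c ∈ A, ∀ d ∈ A,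
      a - b = c - d → a - b ≠ 0 → a = c ∧ b = d)
    (hcard : Real.sqrt (Fintype.card G) - 1 ≤ (A.card : ℝ))
    (B C : Finset G) (hC : C.Nonempty) :
    ∃ c ∈ C,
      |((A ∩ B).card : ℝ) - (A.card : ℝ) * B.card / (Fintype.card G : ℝ)|
        ≤ 2 * Real.sqrt (Real.sqrt (Fintype.card G) * B.card / C.card)
          + |((A ∩ (B \ B.image (· + c))).card : ℝ)
              - (A.card : ℝ) * (B \ B.image (· + c)).card / (Fintype.card G : ℝ)|
          + |((A ∩ (B.image (· + c) \ B)).card : ℝ)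
              - (A.card : ℝ) * (B.image (· + c) \ B).card / (Fintype.card G : ℝ)| := by
  classical
  set n : ℝ := (Fintype.card G : ℝ) with hn
  have hn1 : (1:ℝ) ≤ n := by
    rw [hn]; exact_mod_cast Nat.one_le_iff_ne_zero.2 Fintype.card_ne_zero
  have hn0 : (0:ℝ) < n := by linarith
  set s : ℝ := Real.sqrt (Fintype.card G) with hs
  have hs2 : s ^ 2 = n := Real.sq_sqrt (by positivity)
  have hs1 : 1 ≤ s := by
    rw [hs, show (1:ℝ) = Real.sqrt 1 by simp]
    exact Real.sqrt_le_sqrt (by exact_mod_cast Fintype.card_pos (α := G))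
  set a : ℝ := (A.card : ℝ) with haa
  set b : ℝ := (B.card : ℝ) with hbb
  have ha0 : 0 ≤ a := Nat.cast_nonneg _
  have hb0 : 0 ≤ b := Nat.cast_nonneg _
  have hbn : b ≤ n := by rw [hbb, hn]; exact_mod_cast Finset.card_le_univ B
  have hsize : a ≤ s + 1 := sidon_card_le A hA
  -- variance bound
  set m : ℝ := a * b / n with hm
  set g : G → ℝ := fun x => ((A ∩ B.image (· + x)).card : ℝ) - m with hg
  have e1 : ∑ x : G, ((A ∩ B.image (· + x)).card : ℝ) = a * b := by
    have h := sum_card_inter A B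
    rw [haa, hbb]
    exact_mod_cast h
  have e2 : ∑ x : G, ((A ∩ B.image (· + x)).card : ℝ) ^ 2 ≤ a * b + b * b := by
    have h := (Nat.cast_le (α := ℝ)).2 (sum_sq_card_inter A B hA)
    push_cast at h
    rw [haa, hbb]
    exact_mod_cast h
  have hcardG : ((univ : Finset G).card : ℝ) = n := by
    rw [Finset.card_univ]
  have expand : ∑ x : G, g x ^ 2
      = (∑ x : G, ((A ∩ B.image (· + x)).card : ℝ) ^ 2) - 2 * m * (a * b) + n * m ^ 2 := by
    have : ∀ x : G, g x ^ 2
        = ((A ∩ B.image (· + x)).card : ℝ) ^ 2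
          - 2 * m * ((A ∩ B.image (· + x)).card : ℝ) + m ^ 2 := by
      intro x; simp only [hg]; ring
    rw [Finset.sum_congr rfl fun x _ => this x, Finset.sum_add_distrib,
      Finset.sum_sub_distrib, ← Finset.mul_sum, e1, Finset.sum_const, nsmul_eq_mul, hcardG]
  have hvar : ∑ x : G, g x ^ 2 ≤ 4 * s * b := by
    have hmn : n * m = a * b := by rw [hm]; field_simp
    have hmm : 2 * m * (a * b) - n * m ^ 2 = (a * b) ^ 2 / n := by
      rw [hm]; field_simp; ring
    have h1 : ∑ x : G, g x ^ 2 ≤ a * b + b * b - (a * b) ^ 2 / n := by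
      rw [expand]; linarith [e2, hmm]
    have hd : b * (n - a * a) / n ≤ 2 * s - 1 := by
      rcases le_or_gt (n - a * a) 0 with h | h
      · have h2 : b * (n - a * a) ≤ 0 := mul_nonpos_of_nonneg_of_nonpos hb0 h
        have h3 : b * (n - a * a) / n ≤ 0 := div_nonpos_of_nonpos_of_nonneg h2 (le_of_lt hn0)
        linarith
      · have hsa : (s - 1) * (s - 1) ≤ a * a := by
          nlinarith [hcard]
        have h3 : n - a * a ≤ 2 * s - 1 := by nlinarith
        have h4 : b * (n - a * a) / n ≤ n - a * a := by
          rw [div_le_iff₀ hn0]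
          calc b * (n - a * a) ≤ n * (n - a * a) :=
                mul_le_mul_of_nonneg_right hbn h.le
            _ = (n - a * a) * n := mul_comm _ _
        linarith
    have hident : b * b - (a * b) ^ 2 / n = b * (b * (n - a * a) / n) := by
      field_simp
    have h5 : b * (b * (n - a * a) / n) ≤ b * (2 * s - 1) :=
      mul_le_mul_of_nonneg_left hd hb0
    have h6 : a * b ≤ (s + 1) * b := mul_le_mul_of_nonneg_right hsize hb0
    have h7 : 0 ≤ s * b := mul_nonneg (by linarith) hb0
    nlinarith [h1, hident, h5, h6, h7, hb0]
  -- pigeonhole over C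
  have hC0 : (0:ℝ) < C.card := by exact_mod_cast hC.card_pos
  have hsumC : ∑ c ∈ C, g c ^ 2 ≤ ∑ c ∈ C, 4 * s * b / (C.card : ℝ) := by
    rw [Finset.sum_const, nsmul_eq_mul]
    have h6 : (C.card : ℝ) * (4 * s * b / C.card) = 4 * s * b := by field_simp
    rw [h6]
    calc ∑ c ∈ C, g c ^ 2 ≤ ∑ x : G, g x ^ 2 :=
          Finset.sum_le_sum_of_subset_of_nonneg (Finset.subset_univ C)
            (fun i _ _ => sq_nonneg _)
      _ ≤ 4 * s * b := hvar
  obtain ⟨c, hcC, hc⟩ := Finset.exists_le_of_sum_le hC hsumC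
  refine ⟨c, hcC, ?_⟩
  -- bound |g c|
  have habs : |g c| ≤ 2 * Real.sqrt (s * b / C.card) := by
    have h7 : |g c| = Real.sqrt (g c ^ 2) := (Real.sqrt_sq_eq_abs _).symm
    have h8 : (4 : ℝ) * s * b / C.card = 4 * (s * b / C.card) := by ring
    rw [h7]
    calc Real.sqrt (g c ^ 2) ≤ Real.sqrt (4 * (s * b / C.card)) := by
          apply Real.sqrt_le_sqrt; rw [← h8]; exact hc
      _ = 2 * Real.sqrt (s * b / C.card) := by
          rw [Real.sqrt_mul (by norm_num : (0:ℝ) ≤ 4),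
            show Real.sqrt 4 = 2 by
              rw [show (4:ℝ) = 2 ^ 2 by norm_num, Real.sqrt_sq (by norm_num)]]
  -- triangle identity
  set B' : Finset G := B.image (· + c) with hB'
  have hB'card : B'.card = B.card := card_image_of_injective _ (add_left_injective c)
  have h5n : (A ∩ B).card = (A ∩ B ∩ B').card + (A ∩ (B \ B')).card := by
    rw [← Finset.card_inter_add_card_sdiff (A ∩ B) B']
    congr 2
    ext y; simp only [mem_sdiff, mem_inter]; tauto
  have h6n : (A ∩ B').card = (A ∩ B ∩ B').card + (A ∩ (B' \ B)).card := by
    rw [← Finset.card_inter_add_card_sdiff (A ∩ B') B]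
    congr 2
    · ext y; simp only [mem_inter]; tauto
    · ext y; simp only [mem_sdiff, mem_inter]; tauto
  have h7n : B.card = (B ∩ B').card + (B \ B').card :=
    (Finset.card_inter_add_card_sdiff B B').symm
  have h8n : B'.card = (B ∩ B').card + (B' \ B).card := by
    rw [← Finset.card_inter_add_card_sdiff B' B, Finset.inter_comm]
  -- real versions
  have r5 : ((A ∩ B).card : ℝ) = ((A ∩ B ∩ B').card : ℝ) + ((A ∩ (B \ B')).card : ℝ) := by
    exact_mod_cast congrArg (Nat.cast : ℕ → ℝ) h5n
  have r6 : ((A ∩ B').card : ℝ) = ((A ∩ B ∩ B').card : ℝ) + ((A ∩ (B' \ B)).card : ℝ) := by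
    exact_mod_cast congrArg (Nat.cast : ℕ → ℝ) h6n
  have r7 : b = ((B ∩ B').card : ℝ) + ((B \ B').card : ℝ) := by
    rw [hbb]; exact_mod_cast congrArg (Nat.cast : ℕ → ℝ) h7n
  have r8 : b = ((B ∩ B').card : ℝ) + ((B' \ B).card : ℝ) := by
    rw [hbb, ← hB'card]; exact_mod_cast congrArg (Nat.cast : ℕ → ℝ) h8n
  have hgc : g c = ((A ∩ B').card : ℝ) - a * b / n := by
    simp only [hg, hm, hB']
  have hid : ((A ∩ B).card : ℝ) - a * b / n
      = g c + (((A ∩ (B \ B')).card : ℝ) - a * ((B \ B').card : ℝ) / n)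
          - (((A ∩ (B' \ B)).card : ℝ) - a * ((B' \ B).card : ℝ) / n) := by
    rw [hgc, r5, r6]
    have : a * ((B \ B').card : ℝ) / n - a * ((B' \ B).card : ℝ) / n = 0 := by
      have : ((B \ B').card : ℝ) = ((B' \ B).card : ℝ) := by linarith [r7, r8]
      rw [this]; ring
    linarith [this]
  rw [hid]
  calc |g c + (((A ∩ (B \ B')).card : ℝ) - a * ((B \ B').card : ℝ) / n)
        - (((A ∩ (B' \ B)).card : ℝ) - a * ((B' \ B).card : ℝ) / n)|
      ≤ |g c| + |((A ∩ (B \ B')).card : ℝ) - a * ((B \ B').card : ℝ) / n|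
        + |((A ∩ (B' \ B)).card : ℝ) - a * ((B' \ B).card : ℝ) / n| := by
        refine (abs_sub _ _).trans ?_
        gcongr
        exact abs_add_le _ _
  _ ≤ _ := by gcongr
end

section
/- Let q be a prime power and let Q and Q′ be subgroups of the multiplicative group F_q^*. Then the number N = |{(x, y) ∈ Q × Q′ : x + y = 1}| satisfies |N − |Q||Q′|/q| ≤ 3·√q. -/
open Finset

section FermatAux

/-- A finite commutative group has only finitely many `ℂˣ`-valued characters. -/
lemma my_finite_monoidHom {H : Type*} [CommGroup H] [Finite H] : Finite (H →* ℂˣ) := by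
  haveI : NeZero (Monoid.exponent H) := ⟨Monoid.exponent_ne_zero_of_finite⟩
  haveI : NeZero ((Monoid.exponent H : ℂ)) := ⟨Nat.cast_ne_zero.mpr (NeZero.ne _)⟩
  exact Finite.of_equiv H
    (CommGroup.monoidHom_mulEquiv_of_hasEnoughRootsOfUnity H ℂ).some.toEquiv.symm

/-- Orthogonality of characters of a finite commutative group. -/
lemma my_sum_monoidHom {H : Type*} [CommGroup H] [Finite H] [Fintype (H →* ℂˣ)] (a : H)
    [Decidable (a = 1)] :
    ∑ ω : H →* ℂˣ, ((ω a : ℂ)) = if a = 1 then (Nat.card H : ℂ) else 0 := by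
  haveI : NeZero (Monoid.exponent H) := ⟨Monoid.exponent_ne_zero_of_finite⟩
  haveI : NeZero ((Monoid.exponent H : ℂ)) := ⟨Nat.cast_ne_zero.mpr (NeZero.ne _)⟩
  rcases eq_or_ne a 1 with h | h
  · subst h
    simp only [map_one, Units.val_one, Finset.sum_const, nsmul_eq_mul, mul_one, if_pos rfl,
      Finset.card_univ]
    norm_cast
    rw [← Nat.card_eq_fintype_card]
    exact Nat.card_congr
      (CommGroup.monoidHom_mulEquiv_of_hasEnoughRootsOfUnity H ℂ).some.toEquiv
  · rw [if_neg h]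
    obtain ⟨φ, hφ⟩ := CommGroup.exists_apply_ne_one_of_hasEnoughRootsOfUnity H ℂ h
    have hφ' : ((φ a : ℂ)) ≠ 1 := fun hc => hφ (Units.ext hc)
    refine eq_zero_of_mul_eq_self_left hφ' ?_
    rw [Finset.mul_sum]
    exact Fintype.sum_bijective _ (Group.mulLeft_bijective φ) _ _
      (fun ω => by simp [MonoidHom.mul_apply])

lemma my_card_monoidHom {H : Type*} [CommGroup H] [Finite H] [Fintype (H →* ℂˣ)] :
    Fintype.card (H →* ℂˣ) = Nat.card H := by
  haveI : NeZero (Monoid.exponent H) := ⟨Monoid.exponent_ne_zero_of_finite⟩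
  haveI : NeZero ((Monoid.exponent H : ℂ)) := ⟨Nat.cast_ne_zero.mpr (NeZero.ne _)⟩
  rw [← Nat.card_eq_fintype_card]
  exact Nat.card_congr
    (CommGroup.monoidHom_mulEquiv_of_hasEnoughRootsOfUnity H ℂ).some.toEquiv

variable {F : Type*} [Field F] [Fintype F] [DecidableEq F]

/-- The Jacobi sum as a sum over pairs of units adding up to `1`. -/
lemma my_jacobiSum_pairs (χ ψ : MulChar F ℂ) :
    jacobiSum χ ψ =
      ∑ t ∈ Finset.univ.filter (fun t : Fˣ × Fˣ => (t.1 : F) + (t.2 : F) = 1),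
        χ (t.1 : F) * ψ (t.2 : F) := by
  rw [jacobiSum_eq_sum_sdiff]
  refine Finset.sum_bij' (i := fun x hx => (Units.mk0 x ?_, Units.mk0 (1 - x) ?_))
    (j := fun t _ => (t.1 : F)) ?_ ?_ ?_ ?_ ?_
  · simp only [mem_sdiff, mem_univ, true_and, mem_insert, mem_singleton, not_or] at hx
    exact hx.1
  · simp only [mem_sdiff, mem_univ, true_and, mem_insert, mem_singleton, not_or] at hx
    exact sub_ne_zero.mpr (fun hc => hx.2 hc.symm)
  · intro a ha
    simp only [mem_filter, mem_univ, true_and, Units.val_mk0]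
    ring
  · intro t ht
    simp only [mem_filter, mem_univ, true_and] at ht
    simp only [mem_sdiff, mem_univ, true_and, mem_insert, mem_singleton, not_or]
    constructor
    · exact t.1.ne_zero
    · intro hc
      apply t.2.ne_zero
      have : (t.2 : F) = 1 - t.1 := by linear_combination ht
      rw [this, hc, sub_self]
  · intro a ha
    simp
  · intro t ht
    simp only [mem_filter, mem_univ, true_and] at ht
    ext
    · simp
    · simp only [Units.val_mk0]
      linear_combination -ht
  · intro a ha
    simp

open Classical in
/-- Summing the characters lifted from `Fˣ ⧸ Q` gives the indicator of `Q` (scaled). -/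
lemma my_indicator (Q : Subgroup Fˣ) [Fintype ((Fˣ ⧸ Q) →* ℂˣ)] (u : Fˣ) :
    ∑ ω : (Fˣ ⧸ Q) →* ℂˣ,
        (MulChar.ofUnitHom (ω.comp (QuotientGroup.mk' Q)) : MulChar F ℂ) (u : F)
      = if u ∈ Q then (Nat.card (Fˣ ⧸ Q) : ℂ) else 0 := by
  simp_rw [MulChar.ofUnitHom_coe, MonoidHom.comp_apply, QuotientGroup.mk'_apply]
  rw [my_sum_monoidHom ((u : Fˣ ⧸ Q))]
  simp [QuotientGroup.eq_one_iff]

set_option linter.unusedSectionVars false in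
lemma my_chi_one (Q : Subgroup Fˣ) :
    (MulChar.ofUnitHom (((1 : (Fˣ ⧸ Q) →* ℂˣ)).comp (QuotientGroup.mk' Q)) : MulChar F ℂ)
      = 1 := by
  apply MulChar.ext
  intro u
  rw [MulChar.ofUnitHom_coe, MulChar.one_apply_coe]
  simp

set_option linter.unusedSectionVars false in
lemma my_chi_ne_one (Q : Subgroup Fˣ) {ω : (Fˣ ⧸ Q) →* ℂˣ} (hω : ω ≠ 1) :
    (MulChar.ofUnitHom (ω.comp (QuotientGroup.mk' Q)) : MulChar F ℂ) ≠ 1 := by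
  intro hc
  apply hω
  ext h
  have h1 : (MulChar.ofUnitHom (ω.comp (QuotientGroup.mk' Q)) : MulChar F ℂ) h = 1 := by
    rw [hc]; exact MulChar.one_apply_coe h
  rw [MulChar.ofUnitHom_coe, MonoidHom.comp_apply] at h1
  simpa using h1

/-- The conjugate of a complex Jacobi sum is the Jacobi sum of the inverse characters. -/
lemma my_conj_jacobiSum (χ ψ : MulChar F ℂ) :
    (starRingEnd ℂ) (jacobiSum χ ψ) = jacobiSum χ⁻¹ ψ⁻¹ := by
  simp only [jacobiSum, map_sum, map_mul]
  refine Finset.sum_congr rfl fun x _ => ?_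
  rw [← MulChar.star_apply', ← MulChar.star_apply', starRingEnd_apply, starRingEnd_apply]

/-- The Jacobi sum of two nontrivial characters has absolute value at most `√q`. -/
lemma my_abs_jacobiSum_le {χ ψ : MulChar F ℂ} (hχ : χ ≠ 1) (hψ : ψ ≠ 1) :
    ‖jacobiSum χ ψ‖ ≤ Real.sqrt (Fintype.card F) := by
  have hq1 : (1 : ℝ) ≤ Fintype.card F := by exact_mod_cast Fintype.card_pos
  rcases eq_or_ne (χ * ψ) 1 with h | h
  · have hψχ : ψ = χ⁻¹ := by
      rw [eq_inv_iff_mul_eq_one, mul_comm]; exact h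
    subst hψχ
    rw [jacobiSum_nontrivial_inv hχ, norm_neg]
    have h2 : χ (-1) * χ (-1) = 1 := by
      rw [← map_mul]; norm_num
    have h3 := congrArg norm h2
    rw [norm_mul, norm_one] at h3
    have habs : ‖χ (-1)‖ = 1 := by
      nlinarith [norm_nonneg (χ (-1))]
    rw [habs]
    exact Real.one_le_sqrt.mpr hq1
  · have hchar : ringChar ℂ ≠ ringChar F := by
      rw [ringChar.eq_zero]
      have h5 : ringChar F ≠ 0 := CharP.ringChar_ne_zero_of_finite F
      exact fun hc => h5 hc.symm
    have key := jacobiSum_mul_jacobiSum_inv hchar hχ hψ h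
    rw [← my_conj_jacobiSum, Complex.mul_conj] at key
    have h6 : Complex.normSq (jacobiSum χ ψ) = (Fintype.card F : ℝ) := by
      exact_mod_cast key
    rw [Complex.norm_def, h6]

/-- The elementary real-number estimate used at the end. -/
lemma my_final_arith (A B C qr s : ℝ) (hA : 1 ≤ A) (hB : 1 ≤ B) (hq : 2 ≤ qr)
    (hs : s = Real.sqrt qr)
    (key : |A * B * C - (qr - A - B)| ≤ (A - 1) * (B - 1) * s) :
    |C - ((qr - 1) / A * ((qr - 1) / B)) / qr| ≤ 3 * s := by
  have hqr0 : (0:ℝ) < qr := by linarith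
  have hs1 : 1 ≤ s := by
    rw [hs]; exact Real.one_le_sqrt.mpr (by linarith)
  have hA0 : (0:ℝ) < A := by linarith
  have hB0 : (0:ℝ) < B := by linarith
  have hABq : (0:ℝ) < A * B * qr := by positivity
  have hmain : |C * (A * B * qr) - (qr - 1) ^ 2| ≤ 3 * s * (A * B * qr) := by
    rw [abs_le] at key ⊢
    obtain ⟨k1, k2⟩ := key
    have hAB1 : 1 ≤ A * B := by nlinarith
    have huv : 0 ≤ (A - 1) * (B - 1) := mul_nonneg (by linarith) (by linarith)
    have hfac : 0 ≤ 2 * (A * B) + A + B - 1 := by nlinarith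
    have h1 : 0 ≤ (s - 1) * ((2 * (A * B) + A + B - 1) * qr) :=
      mul_nonneg (by linarith) (mul_nonneg hfac (by linarith))
    have h2 : 2 * (2 * (A * B) + 1) ≤ qr * (2 * (A * B) + 1) := by nlinarith
    have k1' := mul_le_mul_of_nonneg_left k1 (le_of_lt hqr0)
    have k2' := mul_le_mul_of_nonneg_left k2 (le_of_lt hqr0)
    constructor
    · nlinarith [k1', h1, h2, huv, mul_nonneg huv (by linarith : (0:ℝ) ≤ s)]
    · nlinarith [k2', h1, h2, huv, mul_nonneg huv (by linarith : (0:ℝ) ≤ s)]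
  have heq : C - ((qr - 1) / A * ((qr - 1) / B)) / qr
      = (C * (A * B * qr) - (qr - 1) ^ 2) / (A * B * qr) := by
    field_simp
  rw [heq, abs_div, abs_of_pos hABq, div_le_iff₀ hABq]
  exact hmain

end FermatAux

/-- **Fermat equation in finite fields.** Let `q` be a prime power and
`Q, Q'` subgroups of `F_q^*`. Then `N = |{(x,y) ∈ Q × Q' : x + y = 1}|` satisfies
`|N − |Q||Q'|/q| ≤ 3√q`. -/
theorem fermat_subgroups {F : Type*} [Field F] [Fintype F] [DecidableEq F]
    (Q Q' : Subgroup Fˣ) :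
    |((@Finset.filter (Fˣ × Fˣ)
          (fun t => t.1 ∈ Q ∧ t.2 ∈ Q' ∧ (t.1 : F) + (t.2 : F) = 1)
          (Classical.decPred _) Finset.univ).card : ℝ)
        - (Nat.card Q : ℝ) * (Nat.card Q' : ℝ) / (Fintype.card F : ℝ)|
      ≤ 3 * Real.sqrt (Fintype.card F) := by
  classical
  haveI : Finite ((Fˣ ⧸ Q) →* ℂˣ) := my_finite_monoidHom (H := Fˣ ⧸ Q)
  haveI : Finite ((Fˣ ⧸ Q') →* ℂˣ) := my_finite_monoidHom (H := Fˣ ⧸ Q')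
  haveI : Fintype ((Fˣ ⧸ Q) →* ℂˣ) := Fintype.ofFinite _
  haveI : Fintype ((Fˣ ⧸ Q') →* ℂˣ) := Fintype.ofFinite _
  set q : ℕ := Fintype.card F with hqdef
  have hq : 2 ≤ q := Fintype.one_lt_card
  set a : ℕ := Nat.card (Fˣ ⧸ Q) with hadef
  set b : ℕ := Nat.card (Fˣ ⧸ Q') with hbdef
  have ha1 : 1 ≤ a := Nat.card_pos
  have hb1 : 1 ≤ b := Nat.card_pos
  set χ₁ : ((Fˣ ⧸ Q) →* ℂˣ) → MulChar F ℂ :=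
    fun ω => MulChar.ofUnitHom (ω.comp (QuotientGroup.mk' Q)) with hχ₁
  set χ₂ : ((Fˣ ⧸ Q') →* ℂˣ) → MulChar F ℂ :=
    fun ω => MulChar.ofUnitHom (ω.comp (QuotientGroup.mk' Q')) with hχ₂
  set NS := @Finset.filter (Fˣ × Fˣ)
          (fun t => t.1 ∈ Q ∧ t.2 ∈ Q' ∧ (t.1 : F) + (t.2 : F) = 1)
          (Classical.decPred _) Finset.univ with hNS
  set P := Finset.univ.filter (fun t : Fˣ × Fˣ => (t.1 : F) + (t.2 : F) = 1) with hP
  -- basic facts about the characters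
  have hone1 : χ₁ 1 = 1 := by simp only [hχ₁]; exact my_chi_one Q
  have hone2 : χ₂ 1 = 1 := by simp only [hχ₂]; exact my_chi_one Q'
  have hne1 : ∀ {ω : (Fˣ ⧸ Q) →* ℂˣ}, ω ≠ 1 → χ₁ ω ≠ 1 := fun hω => my_chi_ne_one Q hω
  have hne2 : ∀ {ω : (Fˣ ⧸ Q') →* ℂˣ}, ω ≠ 1 → χ₂ ω ≠ 1 := fun hω => my_chi_ne_one Q' hω
  have jbound : ∀ {χ ψ : MulChar F ℂ}, χ ≠ 1 → ψ ≠ 1 →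
      ‖jacobiSum χ ψ‖ ≤ Real.sqrt q := fun hχ hψ => my_abs_jacobiSum_le hχ hψ
  have ind1 : ∀ u : Fˣ, ∑ ω : (Fˣ ⧸ Q) →* ℂˣ, χ₁ ω (u : F)
      = if u ∈ Q then (a : ℂ) else 0 := fun u => my_indicator Q u
  have ind2 : ∀ u : Fˣ, ∑ ω : (Fˣ ⧸ Q') →* ℂˣ, χ₂ ω (u : F)
      = if u ∈ Q' then (b : ℂ) else 0 := fun u => my_indicator Q' u
  have pairs : ∀ (χ ψ : MulChar F ℂ),
      jacobiSum χ ψ = ∑ t ∈ P, χ (t.1 : F) * ψ (t.2 : F) := fun χ ψ => my_jacobiSum_pairs χ ψ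
  -- Step 1: the character-sum expression of the point count
  have hT : ∑ ω : (Fˣ ⧸ Q) →* ℂˣ, ∑ ω' : (Fˣ ⧸ Q') →* ℂˣ, jacobiSum (χ₁ ω) (χ₂ ω')
      = (a : ℂ) * b * NS.card := by
    calc ∑ ω : (Fˣ ⧸ Q) →* ℂˣ, ∑ ω' : (Fˣ ⧸ Q') →* ℂˣ, jacobiSum (χ₁ ω) (χ₂ ω')
        = ∑ ω : (Fˣ ⧸ Q) →* ℂˣ, ∑ ω' : (Fˣ ⧸ Q') →* ℂˣ, ∑ t ∈ P,
            χ₁ ω (t.1 : F) * χ₂ ω' (t.2 : F) :=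
          Finset.sum_congr rfl fun ω _ => Finset.sum_congr rfl fun ω' _ => pairs _ _
      _ = ∑ t ∈ P, (∑ ω : (Fˣ ⧸ Q) →* ℂˣ, χ₁ ω (t.1 : F))
            * (∑ ω' : (Fˣ ⧸ Q') →* ℂˣ, χ₂ ω' (t.2 : F)) := by
          calc ∑ ω : (Fˣ ⧸ Q) →* ℂˣ, ∑ ω' : (Fˣ ⧸ Q') →* ℂˣ, ∑ t ∈ P,
                χ₁ ω (t.1 : F) * χ₂ ω' (t.2 : F)
              = ∑ ω : (Fˣ ⧸ Q) →* ℂˣ, ∑ t ∈ P, ∑ ω' : (Fˣ ⧸ Q') →* ℂˣ,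
                χ₁ ω (t.1 : F) * χ₂ ω' (t.2 : F) :=
                Finset.sum_congr rfl fun ω _ => Finset.sum_comm
            _ = ∑ t ∈ P, ∑ ω : (Fˣ ⧸ Q) →* ℂˣ, ∑ ω' : (Fˣ ⧸ Q') →* ℂˣ,
                χ₁ ω (t.1 : F) * χ₂ ω' (t.2 : F) := Finset.sum_comm
            _ = ∑ t ∈ P, (∑ ω : (Fˣ ⧸ Q) →* ℂˣ, χ₁ ω (t.1 : F))
                * (∑ ω' : (Fˣ ⧸ Q') →* ℂˣ, χ₂ ω' (t.2 : F)) :=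
                Finset.sum_congr rfl fun t _ => (Finset.sum_mul_sum _ _ _ _).symm
      _ = ∑ t ∈ P, (if t.1 ∈ Q then (a : ℂ) else 0) * (if t.2 ∈ Q' then (b : ℂ) else 0) :=
          Finset.sum_congr rfl fun t _ => by rw [ind1 t.1, ind2 t.2]
      _ = ∑ t ∈ P, (if t.1 ∈ Q ∧ t.2 ∈ Q' then (a : ℂ) * b else 0) := by
          refine Finset.sum_congr rfl fun t _ => ?_
          by_cases h1 : t.1 ∈ Q <;> by_cases h2 : t.2 ∈ Q' <;> simp [h1, h2]
      _ = (a : ℂ) * b * (P.filter (fun t => t.1 ∈ Q ∧ t.2 ∈ Q')).card := by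
          rw [Finset.sum_ite, Finset.sum_const, Finset.sum_const_zero, add_zero, nsmul_eq_mul,
            mul_comm]
      _ = (a : ℂ) * b * NS.card := by
          have hPN : P.filter (fun t => t.1 ∈ Q ∧ t.2 ∈ Q') = NS := by
            ext t
            simp only [hP, hNS, Finset.mem_filter, Finset.mem_univ, true_and]
            tauto
          rw [hPN]
  -- Step 2: splitting off the trivial characters
  have cardS₁ : ((univ : Finset ((Fˣ ⧸ Q) →* ℂˣ)) \ {1}).card = a - 1 := by
    rw [Finset.card_univ_diff, Finset.card_singleton, my_card_monoidHom (H := Fˣ ⧸ Q)]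
  have cardS₂ : ((univ : Finset ((Fˣ ⧸ Q') →* ℂˣ)) \ {1}).card = b - 1 := by
    rw [Finset.card_univ_diff, Finset.card_singleton, my_card_monoidHom (H := Fˣ ⧸ Q')]
  have hval1 : jacobiSum (χ₁ 1) (χ₂ 1) = (q : ℂ) - 2 := by
    rw [hone1, hone2, jacobiSum_one_one, hqdef]
  have hrow : ∀ ω' ∈ (univ : Finset ((Fˣ ⧸ Q') →* ℂˣ)) \ {1},
      jacobiSum (χ₁ 1) (χ₂ ω') = -1 := by
    intro ω' hω'
    rw [hone1]
    exact jacobiSum_one_nontrivial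
      (hne2 (fun hc => (Finset.mem_sdiff.mp hω').2 (Finset.mem_singleton.mpr hc)))
  have hcol : ∀ ω ∈ (univ : Finset ((Fˣ ⧸ Q) →* ℂˣ)) \ {1},
      jacobiSum (χ₁ ω) (χ₂ 1) = -1 := by
    intro ω hω
    rw [hone2, jacobiSum_comm]
    exact jacobiSum_one_nontrivial
      (hne1 (fun hc => (Finset.mem_sdiff.mp hω).2 (Finset.mem_singleton.mpr hc)))
  have hsplit : ∑ ω : (Fˣ ⧸ Q) →* ℂˣ, ∑ ω' : (Fˣ ⧸ Q') →* ℂˣ, jacobiSum (χ₁ ω) (χ₂ ω')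
      = (∑ ω ∈ univ \ {1}, ∑ ω' ∈ univ \ {1}, jacobiSum (χ₁ ω) (χ₂ ω'))
        + ((q : ℂ) - a - b) := by
    calc ∑ ω : (Fˣ ⧸ Q) →* ℂˣ, ∑ ω' : (Fˣ ⧸ Q') →* ℂˣ, jacobiSum (χ₁ ω) (χ₂ ω')
        = ∑ ω : (Fˣ ⧸ Q) →* ℂˣ, ((∑ ω' ∈ univ \ {1}, jacobiSum (χ₁ ω) (χ₂ ω'))
            + jacobiSum (χ₁ ω) (χ₂ 1)) :=
          Finset.sum_congr rfl fun ω _ =>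
            Finset.sum_eq_sum_sdiff_singleton_add (Finset.mem_univ 1) _
      _ = (∑ ω ∈ univ \ {1}, ((∑ ω' ∈ univ \ {1}, jacobiSum (χ₁ ω) (χ₂ ω'))
            + jacobiSum (χ₁ ω) (χ₂ 1)))
          + ((∑ ω' ∈ univ \ {1}, jacobiSum (χ₁ 1) (χ₂ ω')) + jacobiSum (χ₁ 1) (χ₂ 1)) :=
          Finset.sum_eq_sum_sdiff_singleton_add (Finset.mem_univ 1) _
      _ = (∑ ω ∈ univ \ {1}, ∑ ω' ∈ univ \ {1}, jacobiSum (χ₁ ω) (χ₂ ω'))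
          + (∑ ω ∈ univ \ {1}, jacobiSum (χ₁ ω) (χ₂ 1))
          + ((∑ ω' ∈ univ \ {1}, jacobiSum (χ₁ 1) (χ₂ ω')) + jacobiSum (χ₁ 1) (χ₂ 1)) := by
          rw [Finset.sum_add_distrib]
      _ = (∑ ω ∈ univ \ {1}, ∑ ω' ∈ univ \ {1}, jacobiSum (χ₁ ω) (χ₂ ω'))
          + ((q : ℂ) - a - b) := by
          rw [hval1, Finset.sum_congr rfl hcol, Finset.sum_congr rfl hrow,
            Finset.sum_const, Finset.sum_const, cardS₁, cardS₂, nsmul_eq_mul, nsmul_eq_mul,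
            Nat.cast_sub ha1, Nat.cast_sub hb1]
          push_cast
          ring
  have hE : ‖∑ ω ∈ univ \ {1}, ∑ ω' ∈ univ \ {1}, jacobiSum (χ₁ ω) (χ₂ ω')‖
      ≤ ((a : ℝ) - 1) * ((b : ℝ) - 1) * Real.sqrt q := by
    refine le_trans (norm_sum_le _ _) ?_
    refine le_trans (Finset.sum_le_sum fun ω hω => norm_sum_le _ _) ?_
    refine le_trans (Finset.sum_le_sum fun ω hω => Finset.sum_le_sum fun ω' hω' =>
      (jbound (hne1 (fun hc => (Finset.mem_sdiff.mp hω).2 (Finset.mem_singleton.mpr hc)))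
        (hne2 (fun hc => (Finset.mem_sdiff.mp hω').2 (Finset.mem_singleton.mpr hc))) :
        ‖jacobiSum (χ₁ ω) (χ₂ ω')‖ ≤ Real.sqrt q)) ?_
    rw [Finset.sum_const, Finset.sum_const, cardS₁, cardS₂, smul_smul, nsmul_eq_mul,
      Nat.cast_mul, Nat.cast_sub ha1, Nat.cast_sub hb1]
    push_cast
    apply le_of_eq
    ring
  -- Step 3: the key real inequality
  have key : |((a : ℝ) * b * NS.card) - ((q : ℝ) - a - b)|
      ≤ ((a : ℝ) - 1) * ((b : ℝ) - 1) * Real.sqrt q := by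
    have h0 : ((a : ℂ) * b * NS.card) - ((q : ℂ) - a - b)
        = ∑ ω ∈ univ \ {1}, ∑ ω' ∈ univ \ {1}, jacobiSum (χ₁ ω) (χ₂ ω') := by
      rw [← hT, hsplit]; ring
    have h1 := hE
    rw [← h0] at h1
    have h2 : ((a : ℂ) * b * NS.card) - ((q : ℂ) - a - b)
        = (((a : ℝ) * b * NS.card - ((q : ℝ) - a - b) : ℝ) : ℂ) := by push_cast; ring
    rwa [h2, Complex.norm_real, Real.norm_eq_abs] at h1
  -- Step 4: Lagrange for the subgroups
  have hcardQnat : Nat.card Q * a = q - 1 := by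
    have h := Subgroup.card_mul_index Q
    rw [Subgroup.index] at h
    rw [hadef, h, Nat.card_eq_fintype_card, Fintype.card_units, hqdef]
  have hcardQ'nat : Nat.card Q' * b = q - 1 := by
    have h := Subgroup.card_mul_index Q'
    rw [Subgroup.index] at h
    rw [hbdef, h, Nat.card_eq_fintype_card, Fintype.card_units, hqdef]
  have hA0 : (0:ℝ) < (a : ℝ) := by exact_mod_cast ha1
  have hB0 : (0:ℝ) < (b : ℝ) := by exact_mod_cast hb1
  have hcQ : (Nat.card Q : ℝ) = ((q : ℝ) - 1) / a := by
    have h7 : ((Nat.card Q * a : ℕ) : ℝ) = ((q - 1 : ℕ) : ℝ) := by rw [hcardQnat]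
    rw [Nat.cast_mul, Nat.cast_sub (by omega)] at h7
    rw [eq_div_iff (ne_of_gt hA0)]
    push_cast at h7
    linarith [h7]
  have hcQ' : (Nat.card Q' : ℝ) = ((q : ℝ) - 1) / b := by
    have h7 : ((Nat.card Q' * b : ℕ) : ℝ) = ((q - 1 : ℕ) : ℝ) := by rw [hcardQ'nat]
    rw [Nat.cast_mul, Nat.cast_sub (by omega)] at h7
    rw [eq_div_iff (ne_of_gt hB0)]
    push_cast at h7
    linarith [h7]
  -- Step 5: conclusion
  rw [hcQ, hcQ']
  exact my_final_arith (a : ℝ) (b : ℝ) (NS.card : ℝ) (q : ℝ) (Real.sqrt q)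
    (by exact_mod_cast ha1) (by exact_mod_cast hb1) (by exact_mod_cast hq) rfl key
end
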